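/- arXiv:1102.3980 — 5 statements merged into one kernel-verified Lean document; each statement's English description precedes it below -/
import Mathlib

section
/- Every word-representable simple graph has a uniform word-representant; that is, if a simple graph G admits a word-representant, then it admits a word-representant W that is k-uniform for some k ≥ 1. -/
open Classical

/-- Distinct letters `x` and `y` alternate in the word `w`: both occur in `w`, and the
subsequence of `w` consisting of the occurrences of `x` and `y` is strictly alternating. -/
def Alternate {V : Type*} (w : List V) (x y : V) : Prop :=
  x ∈ w ∧ y ∈ w ∧ (w.filter fun z => decide (z = x ∨ z = y)).Chain' (· ≠ ·)

/-- The word `w` is a word-representant of the simple graph `G`: every vertex occurs in `w`,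
and two distinct vertices alternate in `w` iff they are adjacent in `G`. -/
def Represents {V : Type*} (G : SimpleGraph V) (w : List V) : Prop :=
  (∀ v : V, v ∈ w) ∧ ∀ x y : V, x ≠ y → (Alternate w x y ↔ G.Adj x y)

/-- A simple graph is word-representable if it has a word-representant. -/
def WordRepresentable {V : Type*} (G : SimpleGraph V) : Prop :=
  ∃ w : List V, Represents G w

section Aux
variable {V : Type*} [DecidableEq V]

/-- The list of first occurrences of letters of `l`, in order. -/
def firsts : List V → List V
  | [] => []
  | a :: l => a :: (firsts l).filter (fun b => decide (b ≠ a))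

@[simp] lemma mem_firsts {b : V} : ∀ {l : List V}, b ∈ firsts l ↔ b ∈ l
  | [] => Iff.rfl
  | a :: l => by
    simp only [firsts, List.mem_cons, List.mem_filter, mem_firsts (l := l),
      decide_eq_true_eq]
    by_cases hb : b = a <;> simp [hb]

lemma nodup_firsts : ∀ (l : List V), (firsts l).Nodup
  | [] => List.nodup_nil
  | a :: l => by
    refine List.nodup_cons.mpr ⟨?_, (nodup_firsts l).filter _⟩
    simp

lemma filter_firsts (p : V → Bool) : ∀ (l : List V),
    (firsts l).filter p = firsts (l.filter p)
  | [] => rfl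
  | a :: l => by
    by_cases hpa : p a = true
    · rw [show (a :: l).filter p = a :: l.filter p by simp [List.filter_cons, hpa]]
      simp only [firsts, List.filter_cons, hpa, if_pos, ← filter_firsts p l,
        List.filter_filter]
      congr 1
      apply List.filter_congr
      intro b _
      simp [Bool.and_comm]
    · rw [show (a :: l).filter p = l.filter p by simp [List.filter_cons, hpa]]
      simp only [firsts, List.filter_cons, hpa, Bool.false_eq_true, if_false,
        List.filter_filter, ← filter_firsts p l]
      apply List.filter_congr
      intro b _
      by_cases hb : b = a
      · subst hb; simp [Bool.eq_false_iff.mpr hpa]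
      · simp [hb]

lemma count_firsts (b : V) (l : List V) :
    (firsts l).count b = if b ∈ l then 1 else 0 := by
  by_cases hb : b ∈ l
  · rw [if_pos hb]
    exact List.count_eq_one_of_mem (nodup_firsts l) (mem_firsts.mpr hb)
  · rw [if_neg hb, List.count_eq_zero]
    simpa using hb

lemma eq_singleton_of_all_eq {l : List V} {b : V} (hb : b ∈ l) (hnd : l.Nodup)
    (hall : ∀ z ∈ l, z = b) : l = [b] := by
  cases l with
  | nil => cases hb
  | cons a t =>
    have ha : a = b := hall a (List.mem_cons_self)
    subst ha
    have ht : t = [] := by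
      cases t with
      | nil => rfl
      | cons c s =>
        have : c = a := hall c (by simp)
        exact absurd (this ▸ (List.mem_cons_self (a := c) (l := s))) (List.nodup_cons.mp hnd).1.elim
    simp [ht]

lemma head_of_count_lt {x y : V} :
    ∀ (n : ℕ) (l : List V), l.length ≤ n → l.Chain' (· ≠ ·) →
      (∀ z ∈ l, z = x ∨ z = y) → l.count x < l.count y → l.head? = some y := by
  intro n
  induction n with
  | zero =>
    intro l hl _ _ hcnt
    have : l = [] := List.length_eq_zero_iff.mp (Nat.le_zero.mp hl)
    subst this; simp at hcnt
  | succ n ih =>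
    intro l hl hch hmem hcnt
    match l with
    | [] => simp at hcnt
    | a :: t =>
      rcases hmem a (List.mem_cons_self) with ha | ha
      · exfalso
        match t with
        | [] =>
          have h1 : List.count x [a] = 1 := by simp [ha]
          have h2 : List.count y [a] ≤ 1 := by
            simpa using List.count_le_length (a := y) (l := [a])
          omega
        | c :: s =>
          have hca : a ≠ c := (List.isChain_cons_cons.mp hch).1
          have hc : c = y := by
            rcases hmem c (by simp) with h | h
            · exact absurd (ha.trans h.symm) hca
            · exact h
          have hxy : x ≠ y := by rintro rfl; omega
          have hcnt' : s.count x < s.count y := by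
            rw [ha] at hcnt
            rw [hc] at hcnt
            simp only [List.count_cons, List.count_nil, beq_iff_eq] at hcnt ⊢
            simp only [hxy, hxy.symm, if_false, if_true, if_pos rfl,
              if_neg (Ne.symm hxy), if_neg hxy] at hcnt
            omega
          have hchs : s.Chain' (· ≠ ·) := ((List.isChain_cons_cons.mp hch).2).tail
          have hmems : ∀ z ∈ s, z = x ∨ z = y := fun z hz => hmem z (by simp [hz])
          have hhead := ih s (by simp at hl ⊢; omega) hchs hmems hcnt'
          have hy : y ∈ s.head? := by simp [hhead]
          have h5 : c ≠ y := (List.isChain_cons.mp (List.isChain_cons_cons.mp hch).2).1 y hy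
          exact h5 hc
      · rw [ha]; rfl

/-- The key step: prepending the pair of first occurrences keeps the chain. -/
lemma chain_pair {a b : V} {t : List V} (hab : a ≠ b)
    (hmem : ∀ z ∈ a :: t, z = a ∨ z = b) (hb : b ∈ t)
    (hch : (a :: t).Chain' (· ≠ ·)) :
    (firsts (a :: t) ++ a :: t).Chain' (· ≠ ·) := by
  have hfil : (firsts t).filter (fun c => decide (c ≠ a)) = [b] := by
    apply eq_singleton_of_all_eq
    · exact List.mem_filter.mpr ⟨mem_firsts.mpr hb, by simp [hab.symm]⟩
    · exact (nodup_firsts t).filter _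
    · intro z hz
      obtain ⟨hz1, hz2⟩ := List.mem_filter.mp hz
      rcases hmem z (by simp [mem_firsts.mp hz1]) with rfl | h
      · simp at hz2
      · exact h
  simp only [firsts, hfil]
  exact List.isChain_cons_cons.mpr ⟨hab, List.isChain_cons_cons.mpr ⟨hab.symm, hch⟩⟩

/-- Core combinatorial step: the filtered chain survives prepending the
first occurrences of deficient letters. -/
lemma chain_step {x y : V} (w : List V) (k : ℕ) (q : V → Bool)
    (hq : ∀ z, q z = true ↔ (z = x ∨ z = y))
    (hxy : x ≠ y) (hxw : x ∈ w) (hyw : y ∈ w) (hk : ∀ v, w.count v ≤ k)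
    (hcf : (w.filter q).Chain' (· ≠ ·)) :
    ((((firsts w).filter (fun v => decide (w.count v < k))).filter q)
        ++ w.filter q).Chain' (· ≠ ·) := by
  rw [List.filter_filter, filter_firsts]
  by_cases hx : w.count x < k <;> by_cases hy : w.count y < k
  · -- both deficient
    have hfun : (fun a => q a && decide (w.count a < k)) = q := by
      funext z
      by_cases hz : q z = true
      · rcases (hq z).mp hz with rfl | rfl
        · simp [hz, hx]
        · simp [hz, hy]
      · simp [Bool.eq_false_iff.mpr hz]
    rw [hfun]
    have hxf : x ∈ w.filter q := List.mem_filter.mpr ⟨hxw, (hq x).mpr (Or.inl rfl)⟩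
    have hyf : y ∈ w.filter q := List.mem_filter.mpr ⟨hyw, (hq y).mpr (Or.inr rfl)⟩
    have hmemf : ∀ z ∈ w.filter q, z = x ∨ z = y :=
      fun z hz => (hq z).mp (List.mem_filter.mp hz).2
    match hf : w.filter q with
    | [] => rw [hf] at hxf; cases hxf
    | a :: t =>
      rw [hf] at hxf hyf hmemf hcf
      rcases hmemf a (by simp) with ha | ha
      · subst ha
        refine chain_pair hxy hmemf ?_ hcf
        rcases List.mem_cons.mp hyf with h | h
        · exact absurd h.symm hxy
        · exact h
      · subst ha
        refine chain_pair hxy.symm (fun z hz => (hmemf z hz).symm) ?_ hcf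
        rcases List.mem_cons.mp hxf with h | h
        · exact absurd h hxy
        · exact h
  · -- x deficient, y not
    have hfil : firsts (w.filter (fun a => q a && decide (w.count a < k))) = [x] := by
      apply eq_singleton_of_all_eq
      · refine mem_firsts.mpr (List.mem_filter.mpr ⟨hxw, ?_⟩)
        simp [hx, (hq x).mpr (Or.inl rfl)]
      · exact nodup_firsts _
      · intro z hz
        obtain ⟨hz1, hz2⟩ := List.mem_filter.mp (mem_firsts.mp hz)
        rcases (hq z).mp (by exact (Bool.and_elim_left hz2)) with rfl | rfl
        · rfl
        · exfalso; simp only [Bool.and_eq_true, decide_eq_true_eq] at hz2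
          exact hy hz2.2
    rw [hfil]
    have hcy : w.count y = k := le_antisymm (hk y) (not_lt.mp hy)
    have hcnt : (w.filter q).count x < (w.filter q).count y := by
      rw [List.count_filter ((hq x).mpr (Or.inl rfl)),
        List.count_filter ((hq y).mpr (Or.inr rfl))]
      omega
    have hhead := head_of_count_lt (w.filter q).length (w.filter q) le_rfl hcf
      (fun z hz => (hq z).mp (List.mem_filter.mp hz).2) hcnt
    rw [List.singleton_append]
    refine List.isChain_cons.mpr ⟨?_, hcf⟩
    intro b hb
    rw [hhead] at hb
    obtain rfl : y = b := by simpa using hb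
    exact hxy
  · -- y deficient, x not
    have hfil : firsts (w.filter (fun a => q a && decide (w.count a < k))) = [y] := by
      apply eq_singleton_of_all_eq
      · refine mem_firsts.mpr (List.mem_filter.mpr ⟨hyw, ?_⟩)
        simp [hy, (hq y).mpr (Or.inr rfl)]
      · exact nodup_firsts _
      · intro z hz
        obtain ⟨hz1, hz2⟩ := List.mem_filter.mp (mem_firsts.mp hz)
        rcases (hq z).mp (by exact (Bool.and_elim_left hz2)) with rfl | rfl
        · exfalso; simp only [Bool.and_eq_true, decide_eq_true_eq] at hz2
          exact hx hz2.2
        · rfl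
    rw [hfil]
    have hcx : w.count x = k := le_antisymm (hk x) (not_lt.mp hx)
    have hcnt : (w.filter q).count y < (w.filter q).count x := by
      rw [List.count_filter ((hq x).mpr (Or.inl rfl)),
        List.count_filter ((hq y).mpr (Or.inr rfl))]
      omega
    have hhead := head_of_count_lt (w.filter q).length (w.filter q) le_rfl hcf
      (fun z hz => ((hq z).mp (List.mem_filter.mp hz).2).symm) hcnt
    rw [List.singleton_append]
    refine List.isChain_cons.mpr ⟨?_, hcf⟩
    intro b hb
    rw [hhead] at hb
    obtain rfl : x = b := by simpa using hb
    exact hxy.symm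
  · -- neither deficient
    have hnil : w.filter (fun a => q a && decide (w.count a < k)) = [] := by
      rw [List.filter_eq_nil_iff]
      intro z hz
      simp only [Bool.and_eq_true, decide_eq_true_eq, not_and]
      intro hqz
      rcases (hq z).mp hqz with rfl | rfl
      · exact hx
      · exact hy
    rw [hnil]
    simpa [firsts] using hcf

lemma rep_step (G : SimpleGraph V) (w : List V) (k : ℕ) (hw : Represents G w)
    (hk : ∀ v, w.count v ≤ k) :
    Represents G ((firsts w).filter (fun v => decide (w.count v < k)) ++ w) := by
  obtain ⟨hmem, halt⟩ := hw
  refine ⟨fun v => List.mem_append_right _ (hmem v), fun x y hxy => ?_⟩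
  rw [← halt x y hxy]
  unfold Alternate
  rw [List.filter_append]
  constructor
  · rintro ⟨-, -, hch⟩
    exact ⟨hmem x, hmem y, (List.isChain_append.mp hch).2.1⟩
  · rintro ⟨-, -, hch⟩
    refine ⟨List.mem_append_right _ (hmem x), List.mem_append_right _ (hmem y), ?_⟩
    exact chain_step w k _ (fun z => by simp) hxy (hmem x) (hmem y) hk hch

lemma count_step (w : List V) (k : ℕ) (hmem : ∀ v : V, v ∈ w) (v : V) :
    ((firsts w).filter (fun u => decide (w.count u < k)) ++ w).count v
      = w.count v + (if w.count v < k then 1 else 0) := by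
  rw [List.count_append]
  by_cases hv : w.count v < k
  · rw [List.count_filter (by simp [hv]), count_firsts, if_pos (hmem v), if_pos hv]
    omega
  · rw [if_neg hv]
    have : v ∉ (firsts w).filter (fun u => decide (w.count u < k)) := by
      intro h
      exact hv (by simpa using (List.mem_filter.mp h).2)
    rw [List.count_eq_zero.mpr this]
    omega

lemma uniformize [Fintype V] (G : SimpleGraph V) (k : ℕ) :
    ∀ (n : ℕ) (w : List V), Represents G w → (∀ v, w.count v ≤ k) →
      (∑ v : V, (k - w.count v)) ≤ n →
      ∃ W : List V, Represents G W ∧ ∀ v : V, W.count v = k := by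
  intro n
  induction n with
  | zero =>
    intro w hw hk hs
    refine ⟨w, hw, fun v => ?_⟩
    have h0 : (∑ v : V, (k - w.count v)) = 0 := Nat.le_zero.mp hs
    have := (Finset.sum_eq_zero_iff.mp h0) v (Finset.mem_univ v)
    have := hk v
    omega
  | succ n ih =>
    intro w hw hk hs
    by_cases hall : ∀ v : V, w.count v = k
    · exact ⟨w, hw, hall⟩
    · push_neg at hall
      obtain ⟨v0, hv0⟩ := hall
      have hv0' : w.count v0 < k := lt_of_le_of_ne (hk v0) hv0
      have hrep' := rep_step G w k hw hk
      have hcnt := count_step w k hw.1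
      refine ih _ hrep' (fun v => by have := hk v; rw [hcnt]; split_ifs with h <;> omega) ?_
      have hlt : (∑ v : V, (k - ((firsts w).filter
            (fun u => decide (w.count u < k)) ++ w).count v))
          < ∑ v : V, (k - w.count v) := by
        apply Finset.sum_lt_sum
        · intro i _
          rw [hcnt]
          split_ifs with h <;> omega
        · refine ⟨v0, Finset.mem_univ _, ?_⟩
          rw [hcnt, if_pos hv0']
          omega
      omega

end Aux

/-- Every word-representable graph has a `k`-uniform word-representant for some `k ≥ 1`. -/
theorem every_representable_graph_has_uniform_representant
    {V : Type*} [DecidableEq V] (G : SimpleGraph V) (h : WordRepresentable G) :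
    ∃ (W : List V) (k : ℕ), 1 ≤ k ∧ Represents G W ∧ ∀ v : V, W.count v = k := by
  obtain ⟨w, hw⟩ := h
  cases isEmpty_or_nonempty V with
  | inl hE =>
    exact ⟨[], 1, le_refl 1, ⟨fun v => (hE.false v).elim, fun x y _ => (hE.false x).elim⟩,
      fun v => (hE.false v).elim⟩
  | inr hN =>
    haveI : Fintype V := Fintype.ofList w hw.1
    set k := Finset.univ.sup fun v => w.count v with hkdef
    have hk : ∀ v, w.count v ≤ k := fun v =>
      Finset.le_sup (f := fun u => w.count u) (Finset.mem_univ v)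
    have hk1 : 1 ≤ k := by
      obtain ⟨v0⟩ := hN
      have h1 : 1 ≤ w.count v0 := List.count_pos_iff.mpr (hw.1 v0)
      exact h1.trans (hk v0)
    obtain ⟨W, hW, hU⟩ := uniformize G k (∑ v : V, (k - w.count v)) w hw hk le_rfl
    exact ⟨W, k, hk1, hW, hU⟩
end

section
/- Let u = u₀u₁⋯uₙ be a uniform word and let Cu = u₁u₂⋯uₙu₀ be its cyclic shift. Then u and Cu have the same alternating graph; in particular, for any two distinct letters x and y occurring in u, x and y alternate in u if and only if they alternate in Cu. -/
open Classical

lemma key {V : Type*} [DecidableEq V] {x y : V} (hxy : x ≠ y) :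
    ∀ l : List V, (∀ z ∈ l, z = x ∨ z = y) → l.Chain' (· ≠ ·) →
      l.count x = l.count y → ∀ a, l.head? = some a → l.getLast? ≠ some a := by
  intro l
  generalize hn : l.length = n
  induction n using Nat.strong_induction_on generalizing l with
  | _ n ih =>
  match l with
  | [] => intro _ _ _ a ha; simp at ha
  | [a] =>
    intro hmem _hchain hcount b hb
    rcases hmem a (by simp) with h | h <;> subst h <;>
      simp [List.count_cons, hxy, hxy.symm, Ne.symm hxy] at hcount
  | a :: b :: t =>
    intro hmem hchain hcount c hc
    obtain rfl : a = c := by simpa using hc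
    have hab : a ≠ b := (List.isChain_cons_cons.mp hchain).1
    match t with
    | [] =>
      simp only [List.getLast?_cons_cons, List.getLast?_singleton, ne_eq,
        Option.some.injEq]
      exact fun h => hab (h ▸ rfl)
    | d :: t' =>
      have hbd : b ≠ d := (List.isChain_cons_cons.mp (List.isChain_cons_cons.mp hchain).2).1
      have hd : d = a := by
        rcases hmem a (by simp) with h | h <;> rcases hmem b (by simp) with h' | h' <;>
          rcases hmem d (by simp) with h'' | h'' <;> subst h <;> subst h'' <;>
          simp_all
      have hcount' : (d :: t').count x = (d :: t').count y := by
        rcases hmem a (by simp) with h | h <;> rcases hmem b (by simp) with h' | h' <;>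
          subst h <;> subst h' <;> simp_all [List.count_cons] <;> omega
      have hlast : (a :: b :: d :: t').getLast? = (d :: t').getLast? := by
        rw [List.getLast?_cons_cons, List.getLast?_cons_cons]
      rw [hlast]
      exact ih ((d :: t').length) (by simp at hn ⊢; omega) (d :: t') rfl
        (fun z hz => hmem z (by simp at hz ⊢; tauto))
        ((List.isChain_cons_cons.mp (List.isChain_cons_cons.mp hchain).2).2)
        hcount' a (by simp [hd])

lemma altShift {V : Type*} [DecidableEq V] {x y : V} (hxy : x ≠ y) (g : V → Bool)
    (hg : ∀ z, g z = true ↔ (z = x ∨ z = y)) (a : V) (t : List V) (k : ℕ) (hk : 1 ≤ k)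
    (hcountx : (a :: t).count x = k) (hcounty : (a :: t).count y = k) :
    ((a :: t).filter g).Chain' (· ≠ ·) ↔ ((t ++ [a]).filter g).Chain' (· ≠ ·) := by
  by_cases hfa : g a = true
  · have h1 : (a :: t).filter g = a :: t.filter g := by
      rw [List.filter_cons, if_pos hfa]
    have h2 : (t ++ [a]).filter g = t.filter g ++ [a] := by
      rw [List.filter_append]; simp [hfa]
    generalize hgen : t.filter g = w at h1 h2
    rw [h1, h2]
    have hcx : (a :: w).count x = k := by
      rw [← h1, List.count_filter (by rw [hg]; tauto)]
      exact hcountx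
    have hcy : (a :: w).count y = k := by
      rw [← h1, List.count_filter (by rw [hg]; tauto)]
      exact hcounty
    have hmemw : ∀ z ∈ a :: w, z = x ∨ z = y := by
      intro z hz
      rw [← h1] at hz
      exact (hg z).mp (List.of_mem_filter hz)
    have hwne : w ≠ [] := by
      intro h
      rw [h] at hcx hcy
      rcases hmemw a (by simp) with h' | h' <;> subst h' <;>
        simp [List.count_cons, hxy, Ne.symm hxy, hxy.symm] at hcx hcy <;> omega
    obtain ⟨b, w', rfl⟩ : ∃ b w', w = b :: w' := by
      cases hww : w with
      | nil => exact absurd hww hwne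
      | cons b w' => exact ⟨b, w', rfl⟩
    constructor
    · intro hchain
      have hlast := key hxy (a :: b :: w') hmemw hchain (hcx.trans hcy.symm) a rfl
      rw [List.Chain', List.isChain_append]
      refine ⟨(List.isChain_cons_cons.mp hchain).2, List.isChain_singleton a, ?_⟩
      intro z hz z' hz'
      simp only [List.head?_cons, Option.mem_def, Option.some.injEq] at hz'
      subst hz'
      intro h
      apply hlast
      rw [List.getLast?_cons_cons, ← h]
      exact Option.mem_def.mp hz
    · intro hchain
      have hmem2 : ∀ z ∈ (b :: w') ++ [a], z = x ∨ z = y := by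
        intro z hz
        apply hmemw
        simp at hz ⊢; tauto
      have hcnt2 : ((b :: w') ++ [a]).count x = ((b :: w') ++ [a]).count y := by
        have ex : ((b :: w') ++ [a]).count x = (a :: b :: w').count x := by
          simp [List.count_append, List.count_cons]; omega
        have ey : ((b :: w') ++ [a]).count y = (a :: b :: w').count y := by
          simp [List.count_append, List.count_cons]; omega
        rw [ex, ey, hcx, hcy]
      have hhead := key hxy ((b :: w') ++ [a]) hmem2 hchain hcnt2 b rfl
      have hlastval : ((b :: w') ++ [a]).getLast? = some a :=
        List.getLast?_concat
      have hba : b ≠ a := fun h => hhead (h ▸ hlastval)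
      rw [List.Chain', List.isChain_cons_cons]
      exact ⟨Ne.symm hba, (List.isChain_append.mp hchain).1⟩
  · have h1 : (a :: t).filter g = t.filter g := by
      rw [List.filter_cons, if_neg hfa]
    have h2 : (t ++ [a]).filter g = t.filter g := by
      rw [List.filter_append]; simp [hfa]
    rw [h1, h2]

/-- A uniform word `u` and its cyclic shift `u.rotate 1 = u₁u₂⋯uₙu₀` have the same
alternating graph: any two distinct letters occurring in `u` alternate in `u`
iff they alternate in the cyclic shift of `u`. -/
theorem alternate_iff_alternate_cyclicShift_of_uniform
    {V : Type*} [DecidableEq V] (u : List V) (k : ℕ) (hk : 1 ≤ k)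
    (huniform : ∀ v ∈ u, u.count v = k)
    (x y : V) (hxy : x ≠ y) (hx : x ∈ u) (hy : y ∈ u) :
    Alternate u x y ↔ Alternate (u.rotate 1) x y := by
  obtain ⟨a, t, rfl⟩ : ∃ a t, u = a :: t := by
    cases u with
    | nil => simp at hx
    | cons a t => exact ⟨a, t, rfl⟩
  have hrot : (a :: t).rotate 1 = t ++ [a] := by
    rw [List.rotate_cons_succ, List.rotate_zero]
  rw [hrot]
  have hmemrot : ∀ z : V, z ∈ t ++ [a] ↔ z ∈ a :: t := by
    intro z; simp [or_comm]
  unfold Alternate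
  rw [hmemrot x, hmemrot y]
  simp only [hx, hy, true_and]
  refine altShift hxy _ (fun z => ?_) a t k hk (huniform x hx) (huniform y hy)
  simp
end

section
/- Let n ≥ 3 and let C_{n+1} be the cycle graph on vertices {0, 1, …, n} labeled in consecutive order (so i and i+1 are adjacent for 0 ≤ i < n, n and 0 are adjacent, and there are no other edges). Then the word 0·1·2⋯n does not occur as a contiguous subword (factor) of any uniform word-representant of C_{n+1}. -/
open Classical

open List

variable {V : Type*}

section Helpers

/-- Prefix-count inequalities for an alternating two-letter word, symmetric version. -/
lemma alt_prefix_count [DecidableEq V] {x y : V} (hxy : x ≠ y) :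
    ∀ (g : List V), (∀ z ∈ g, z = x ∨ z = y) → g.Chain' (· ≠ ·) →
    ∀ c d, ((c = x ∧ d = y) ∨ (c = y ∧ d = x)) → g.head? = some c →
    ∀ q, q <+: g → q.count d ≤ q.count c ∧ q.count c ≤ q.count d + 1 := by
  intro g
  induction g with
  | nil => intro _ _ c d _ h; exact absurd h (by simp)
  | cons a g' ih =>
    intro hmem hch c d hcd hhead q hq
    have hca : c = a := by
      have : a = c := by simpa using hhead
      exact this.symm
    subst hca
    have had : c ≠ d := by rcases hcd with ⟨rfl, rfl⟩ | ⟨rfl, rfl⟩ <;> [exact hxy; exact hxy.symm]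
    cases q with
    | nil => simp
    | cons b q' =>
      have hba : b = c := (List.cons_prefix_cons.mp hq).1
      have hq' : q' <+: g' := (List.cons_prefix_cons.mp hq).2
      subst hba
      cases g' with
      | nil =>
        have hq'' : q' = [] := List.prefix_nil.mp hq'
        subst hq''
        simp [List.count_cons, had]
      | cons b' g'' =>
        have h1 : b ≠ b' := (List.isChain_cons.mp hch).1 b' (by simp)
        have hb'd : b' = d := by
          rcases hmem b' (by simp) with h2 | h2 <;> rcases hcd with ⟨h3, h4⟩ | ⟨h3, h4⟩ <;>
            simp_all
        have hih := ih (fun z hz => hmem z (List.mem_cons_of_mem _ hz)) hch.tail d b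
          (by rcases hcd with ⟨h3, h4⟩ | ⟨h3, h4⟩ <;> simp_all) (by simp [hb'd]) q' hq'
        have e1 : (b :: q').count d = q'.count d := by simp [List.count_cons, had]
        have e2 : (b :: q').count b = q'.count b + 1 := by simp
        rw [e1, e2]
        omega

/-- Prefix-count inequalities for an alternating two-letter word starting with `x`. -/
lemma alt_prefix_count' [DecidableEq V] {x y : V} (hxy : x ≠ y) (g : List V)
    (hmem : ∀ z ∈ g, z = x ∨ z = y) (hch : g.Chain' (· ≠ ·))
    (hhead : g.head? = some x) :
    ∀ q, q <+: g → q.count y ≤ q.count x ∧ q.count x ≤ q.count y + 1 :=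
  alt_prefix_count hxy g hmem hch x y (Or.inl ⟨rfl, rfl⟩) hhead

/-- A two-letter word whose prefixes satisfy the alternating count inequalities is
an alternating word. -/
lemma count_chain' [DecidableEq V] {x y : V} (hxy : x ≠ y) (g : List V)
    (hmem : ∀ z ∈ g, z = x ∨ z = y)
    (hq : ∀ q, q <+: g → q.count y ≤ q.count x ∧ q.count x ≤ q.count y + 1) :
    g.Chain' (· ≠ ·) := by
  unfold List.Chain'; rw [List.isChain_iff_getElem]
  intro i hi heq
  have hi1 : i + 1 < g.length := by omega
  have hi0 : i < g.length := by omega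
  have h1 : g.take (i+1) = g.take i ++ [g.get ⟨i, hi0⟩] := by
    rw [List.take_succ, List.getElem?_eq_getElem hi0]
    simp
  have h2 : g.take (i+2) = g.take i ++ [g.get ⟨i, hi0⟩, g.get ⟨i, hi0⟩] := by
    rw [List.take_succ, List.getElem?_eq_getElem hi1, h1]
    simp only [List.append_assoc, List.singleton_append]
    congr 2
    · exact heq.symm ▸ rfl
  have hc := hmem _ (List.get_mem g ⟨i, hi0⟩)
  obtain ⟨l1, u1⟩ := hq (g.take i) (List.take_prefix _ _)
  obtain ⟨l2, u2⟩ := hq (g.take (i+1)) (List.take_prefix _ _)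
  obtain ⟨l3, u3⟩ := hq (g.take (i+2)) (List.take_prefix _ _)
  rw [h1] at l2 u2
  rw [h2] at l3 u3
  rcases hc with hcx | hcy
  · rw [hcx] at l2 u2 l3 u3
    simp [List.count_append, List.count_cons, hxy, hxy.symm] at l2 u2 l3 u3
    omega
  · rw [hcy] at l2 u2 l3 u3
    simp [List.count_append, List.count_cons, hxy, hxy.symm] at l2 u2 l3 u3
    omega

lemma alt_head [DecidableEq V] {x y : V} (hxy : x ≠ y) (f : List V)
    (hmem : ∀ z ∈ f, z = x ∨ z = y) (hch : f.Chain' (· ≠ ·))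
    (hcount : f.count y = f.count x + 1) :
    f.head? = some y := by
  have hne : f ≠ [] := by
    intro h; subst h; simp at hcount
  obtain ⟨a, f', rfl⟩ := List.exists_cons_of_ne_nil hne
  rcases hmem a (List.mem_cons_self) with rfl | rfl
  · exfalso
    have := alt_prefix_count' hxy _ hmem hch (by simp) _ (List.prefix_refl _)
    omega
  · rfl

lemma alt_last [DecidableEq V] {x y : V} (hxy : x ≠ y) (f : List V)
    (hmem : ∀ z ∈ f, z = x ∨ z = y) (hch : f.Chain' (· ≠ ·))
    (hcount : f.count y = f.count x + 1) :
    f.getLast? = some y := by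
  rw [← List.head?_reverse]
  exact alt_head hxy f.reverse (fun z hz => hmem z (List.mem_reverse.mp hz))
    (List.isChain_reverse.mpr (hch.imp fun a b h => h.symm))
    (by rw [List.count_reverse, List.count_reverse]; exact hcount)

lemma chain'_rot [DecidableEq V] {x y : V} (hxy : x ≠ y) (f : List V)
    (hmem : ∀ z ∈ f, z = x ∨ z = y) (hcount : f.count y = f.count x + 1) :
    ((x :: f).Chain' (· ≠ ·) ↔ (f ++ [x]).Chain' (· ≠ ·)) := by
  constructor
  · intro h
    have hch : f.Chain' (· ≠ ·) := h.tail
    have hl := alt_last hxy f hmem hch hcount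
    unfold List.Chain'; rw [List.isChain_append]
    refine ⟨hch, List.isChain_singleton _, ?_⟩
    intro a ha b hb
    simp only [List.head?_cons, Option.mem_def, Option.some.injEq] at hb
    rw [hl] at ha
    simp only [Option.mem_def, Option.some.injEq] at ha
    subst ha; subst hb
    exact hxy.symm
  · intro h
    have hch : f.Chain' (· ≠ ·) := h.prefix (List.prefix_append _ _)
    have hh := alt_head hxy f hmem hch hcount
    unfold List.Chain'; rw [List.isChain_cons]
    refine ⟨?_, hch⟩
    intro z hz
    rw [hh] at hz
    simp only [Option.mem_def, Option.some.injEq] at hz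
    subst hz
    exact hxy

/-- canonical predicate matching the one in `Alternate` -/
noncomputable def altP {V : Type*} (x y : V) : V → Bool := fun z => decide (z = x ∨ z = y)

lemma altP_iff {x y z : V} : altP x y z = true ↔ (z = x ∨ z = y) := by
  simp [altP]

lemma alternate_def (w : List V) (x y : V) :
    Alternate w x y ↔ (x ∈ w ∧ y ∈ w ∧ (w.filter (altP x y)).Chain' (· ≠ ·)) := Iff.rfl

lemma chain'_filter_rot [DecidableEq V] {x y : V} (hxy : x ≠ y) (p : V → Bool)
    (hp : ∀ z, p z = true ↔ (z = x ∨ z = y)) (w : List V)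
    (hcount : (x :: w).count y = (x :: w).count x) :
    (List.filter p (x :: w)).Chain' (· ≠ ·) ↔ (List.filter p (w ++ [x])).Chain' (· ≠ ·) := by
  have hpx : p x = true := (hp x).mpr (Or.inl rfl)
  have hpy : p y = true := (hp y).mpr (Or.inr rfl)
  have hfc : List.filter p (x :: w) = x :: List.filter p w := by
    rw [List.filter_cons_of_pos hpx]
  have hfa : List.filter p (w ++ [x]) = List.filter p w ++ [x] := by
    rw [List.filter_append]
    congr 1
    simp [hpx]
  rw [hfc, hfa]
  apply chain'_rot hxy
  · intro z hz
    exact (hp z).mp (List.of_mem_filter hz)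
  · rw [List.count_filter hpy, List.count_filter hpx]
    have h1 : (x :: w).count y = w.count y := by simp [List.count_cons, hxy.symm, hxy]
    have h2 : (x :: w).count x = w.count x + 1 := by simp
    omega

lemma alternate_comm (u : List V) (x y : V) : Alternate u x y ↔ Alternate u y x := by
  unfold Alternate
  have hf : (u.filter fun z => decide (z = x ∨ z = y)) =
      (u.filter fun z => decide (z = y ∨ z = x)) := by
    apply List.filter_congr
    intro a _
    exact decide_eq_decide.mpr or_comm
  rw [hf]
  tauto

lemma alternate_rot [DecidableEq V] (a : V) (w : List V)
    (hcount : ∀ v : V, (a :: w).count v = (a :: w).count a) :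
    ∀ x y : V, x ≠ y → (Alternate (w ++ [a]) x y ↔ Alternate (a :: w) x y) := by
  have key : ∀ y : V, a ≠ y → (Alternate (w ++ [a]) a y ↔ Alternate (a :: w) a y) := by
    intro y hxy
    have hc : (a :: w).count y = (a :: w).count a := hcount y
    have hcy : w.count y = w.count a + 1 := by
      have h1 : (a :: w).count y = w.count y := by simp [List.count_cons, hxy.symm, hxy]
      have h2 : (a :: w).count a = w.count a + 1 := by simp
      omega
    have hymem : y ∈ w := by
      have : 0 < w.count y := by omega
      exact List.count_pos_iff.mp this
    rw [alternate_def, alternate_def]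
    constructor
    · rintro ⟨-, -, h3⟩
      exact ⟨List.mem_cons_self, List.mem_cons_of_mem _ hymem,
        (chain'_filter_rot hxy (altP a y) (fun z => altP_iff) w hc).mpr h3⟩
    · rintro ⟨-, -, h3⟩
      exact ⟨by simp, by simp [hymem],
        (chain'_filter_rot hxy (altP a y) (fun z => altP_iff) w hc).mp h3⟩
  intro x y hxy
  by_cases hax : a = x
  · rw [← hax]
    exact key y (fun h => hxy (hax.symm.trans h))
  · by_cases hay : a = y
    · rw [← hay, alternate_comm (w ++ [a]) x a, alternate_comm (a :: w) x a]
      exact key x hax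
    · rw [alternate_def, alternate_def]
      have hpa : altP x y a = false := by
        rw [Bool.eq_false_iff]
        intro h
        rcases altP_iff.mp h with h' | h'
        · exact hax h'
        · exact hay h'
      have hfil : List.filter (altP x y) (w ++ [a]) = List.filter (altP x y) (a :: w) := by
        rw [List.filter_append, List.filter_cons_of_neg (by simp [hpa])]
        simp [List.filter_cons, hpa]
      constructor
      · rintro ⟨m1, m2, h3⟩
        refine ⟨?_, ?_, ?_⟩
        · simp only [List.mem_append, List.mem_singleton] at m1
          simp only [List.mem_cons]
          tauto
        · simp only [List.mem_append, List.mem_singleton] at m2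
          simp only [List.mem_cons]
          tauto
        · rw [← hfil]; exact h3
      · rintro ⟨m1, m2, h3⟩
        refine ⟨?_, ?_, ?_⟩
        · simp only [List.mem_cons] at m1
          simp only [List.mem_append, List.mem_singleton]
          tauto
        · simp only [List.mem_cons] at m2
          simp only [List.mem_append, List.mem_singleton]
          tauto
        · rw [hfil]; exact h3

lemma represents_rotate [DecidableEq V] (G : SimpleGraph V) (a : V) (w : List V)
    (hcount : ∀ v : V, (a :: w).count v = (a :: w).count a)
    (hrep : Represents G (a :: w)) : Represents G (w ++ [a]) := by
  constructor
  · intro v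
    have := hrep.1 v
    simp at this ⊢
    tauto
  · intro x y hxy
    rw [← hrep.2 x y hxy]
    exact alternate_rot a w hcount x y hxy

lemma represents_rotate_many [DecidableEq V] (G : SimpleGraph V) (k : ℕ) :
    ∀ (s m : List V), (∀ v : V, (s ++ m).count v = k) → Represents G (s ++ m) →
      Represents G (m ++ s) := by
  intro s
  induction s with
  | nil => intro m h1 h2; simpa using h2
  | cons a s' ih =>
    intro m hc hrep
    have hca : ∀ v : V, (a :: (s' ++ m)).count v = (a :: (s' ++ m)).count a := by
      intro v
      rw [show (a :: (s' ++ m)) = (a :: s') ++ m from rfl]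
      rw [hc v, hc a]
    have h1 : Represents G ((s' ++ m) ++ [a]) := represents_rotate G a (s' ++ m) hca hrep
    rw [List.append_assoc] at h1
    have h2 : ∀ v : V, (s' ++ (m ++ [a])).count v = k := by
      intro v
      have := hc v
      simp [List.count_append, List.count_cons] at this ⊢
      omega
    have := ih (m ++ [a]) h2 h1
    rwa [List.append_assoc, List.singleton_append] at this

lemma filter_finRange {m : ℕ} (x y : Fin m) (hxy : x < y) (p : Fin m → Bool)
    (hp : ∀ z, p z = true ↔ (z = x ∨ z = y)) :
    (List.finRange m).filter p = [x, y] := by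
  have hxyne : x ≠ y := ne_of_lt hxy
  have hperm : List.Perm ((List.finRange m).filter p) [x, y] := by
    rw [List.perm_iff_count]
    intro a
    have hcnt1 : (List.finRange m).count a = 1 := by
      have h1 : (List.finRange m).count a ≤ 1 :=
        List.nodup_iff_count_le_one.mp (List.nodup_finRange m) a
      have h2 : 0 < (List.finRange m).count a := List.count_pos_iff.mpr (List.mem_finRange a)
      omega
    by_cases hpa : p a = true
    · rw [List.count_filter hpa, hcnt1]
      rcases (hp a).mp hpa with rfl | rfl
      · simp [List.count_cons, hxyne.symm]
      · simp [List.count_cons, hxyne]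
    · have h1 : ((List.finRange m).filter p).count a = 0 := by
        rw [List.count_eq_zero]
        intro hmem
        exact hpa (List.of_mem_filter hmem)
      have hax : a ≠ x := fun h => hpa ((hp a).mpr (Or.inl h))
      have hay : a ≠ y := fun h => hpa ((hp a).mpr (Or.inr h))
      rw [h1]
      simp [List.count_cons, hax, hay, hax.symm, hay.symm]
  have hsorted : ((List.finRange m).filter p).Pairwise (· ≤ ·) := by
    have := (List.pairwise_lt_finRange m).filter p
    exact this.imp fun h => le_of_lt h
  exact List.Perm.eq_of_pairwise' hsorted
    (by simp [List.pairwise_cons]; exact le_of_lt hxy) hperm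

lemma prefix_filter_exists (p : V → Bool) :
    ∀ (l q' : List V), q' <+: l.filter p → ∃ q, q <+: l ∧ q.filter p = q' := by
  intro l
  induction l with
  | nil =>
    intro q' h
    rw [List.filter_nil] at h
    exact ⟨[], List.nil_prefix, (List.prefix_nil.mp h).symm⟩
  | cons a l' ih =>
    intro q' h
    by_cases hpa : p a = true
    · rw [List.filter_cons_of_pos hpa] at h
      cases q' with
      | nil => exact ⟨[], List.nil_prefix, rfl⟩
      | cons b q'' =>
        obtain ⟨hb, h2⟩ := List.cons_prefix_cons.mp h
        obtain ⟨q, hq1, hq2⟩ := ih q'' h2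
        subst hb
        exact ⟨b :: q, List.cons_prefix_cons.mpr ⟨rfl, hq1⟩,
          by rw [List.filter_cons_of_pos hpa, hq2]⟩
    · rw [List.filter_cons_of_neg hpa] at h
      obtain ⟨q, hq1, hq2⟩ := ih q' h
      exact ⟨a :: q, List.cons_prefix_cons.mpr ⟨rfl, hq1⟩,
        by rw [List.filter_cons_of_neg hpa, hq2]⟩

end Helpers

/-- For `n ≥ 3`, the word `0·1·2⋯n` (i.e. `List.finRange (n+1)`) is not a contiguous subword
(factor) of any uniform word-representant of the cycle `C_{n+1}` on `{0, 1, …, n}`,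
whose vertices are labeled in consecutive order. -/
theorem finRange_not_infix_of_uniform_representant_of_cycle
    (n : ℕ) (hn : 3 ≤ n) (u : List (Fin (n + 1))) (k : ℕ) (hk : 1 ≤ k)
    (huniform : ∀ v : Fin (n + 1), u.count v = k)
    (hrep : Represents (SimpleGraph.cycleGraph (n + 1)) u) :
    ¬ List.finRange (n + 1) <:+: u := by
  intro hinf
  obtain ⟨s, t, hu⟩ := hinf
  -- rotate the word so that it starts with the factor 0 1 2 ⋯ n
  have hcnt : ∀ v : Fin (n+1), (s ++ (List.finRange (n+1) ++ t)).count v = k := by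
    intro v
    rw [← List.append_assoc, hu]
    exact huniform v
  have hrep2 : Represents (SimpleGraph.cycleGraph (n+1)) ((List.finRange (n+1) ++ t) ++ s) := by
    apply represents_rotate_many _ k _ _ hcnt
    rw [← List.append_assoc, hu]
    exact hrep
  set w : List (Fin (n+1)) := (List.finRange (n+1) ++ t) ++ s with hw
  have hwform : w = List.finRange (n+1) ++ (t ++ s) := by rw [hw, List.append_assoc]
  -- prefix-count inequalities for adjacent pairs, labeled in increasing order
  have hpair : ∀ x y : Fin (n+1), x < y →
      (SimpleGraph.cycleGraph (n+1)).Adj x y →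
      ∀ q, q <+: w → q.count y ≤ q.count x ∧ q.count x ≤ q.count y + 1 := by
    intro x y hlt hadj q hq
    have hxy : x ≠ y := ne_of_lt hlt
    have halt : Alternate w x y := (hrep2.2 x y hxy).mpr hadj
    rw [alternate_def] at halt
    obtain ⟨-, -, hch⟩ := halt
    have hfF : (List.finRange (n+1)).filter (altP x y) = [x, y] :=
      filter_finRange x y hlt _ (fun z => altP_iff)
    have hhead : (w.filter (altP x y)).head? = some x := by
      rw [hwform, List.filter_append, hfF]
      rfl
    have key := alt_prefix_count' hxy (w.filter (altP x y))
      (fun z hz => altP_iff.mp (List.of_mem_filter hz)) hch hhead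
      (q.filter (altP x y)) (hq.filter _)
    rwa [List.count_filter (altP_iff.mpr (Or.inr rfl)),
      List.count_filter (altP_iff.mpr (Or.inl rfl))] at key
  -- the vertices 0, 1, 2, n
  have hn1 : 0 < n + 1 := by omega
  -- adjacency of consecutive vertices
  have hadj_succ : ∀ (j : ℕ) (hj : j < n),
      (SimpleGraph.cycleGraph (n+1)).Adj ⟨j, by omega⟩ ⟨j+1, by omega⟩ := by
    intro j hj
    rw [SimpleGraph.cycleGraph_adj']
    right
    rw [Fin.sub_def]
    simp only
    have h1 : (n + 1 - j + (j+1)) % (n+1) = 1 := by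
      have h2 : n + 1 - j + (j + 1) = (n + 1) + 1 := by omega
      rw [h2, Nat.add_mod_left]
      exact Nat.mod_eq_of_lt (by omega)
    exact h1
  have hadj_0n : (SimpleGraph.cycleGraph (n+1)).Adj ⟨0, by omega⟩ ⟨n, by omega⟩ := by
    rw [SimpleGraph.cycleGraph_adj']
    left
    rw [Fin.sub_def]
    simp only
    have h1 : (n + 1 - n + 0) % (n+1) = 1 := by
      have h2 : n + 1 - n + 0 = 1 := by omega
      rw [h2]
      exact Nat.mod_eq_of_lt (by omega)
    exact h1
  -- the step inequalities
  have hstep : ∀ (j : ℕ) (hj : j < n) (q : List (Fin (n+1))), q <+: w →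
      q.count ⟨j+1, by omega⟩ ≤ q.count ⟨j, by omega⟩ ∧
      q.count ⟨j, by omega⟩ ≤ q.count ⟨j+1, by omega⟩ + 1 := by
    intro j hj q hq
    exact hpair ⟨j, by omega⟩ ⟨j+1, by omega⟩ (by simp [Fin.lt_def]) (hadj_succ j hj) q hq
  have h0n : ∀ (q : List (Fin (n+1))), q <+: w →
      q.count ⟨n, by omega⟩ ≤ q.count ⟨0, by omega⟩ ∧
      q.count ⟨0, by omega⟩ ≤ q.count ⟨n, by omega⟩ + 1 := by
    intro q hq
    exact hpair ⟨0, by omega⟩ ⟨n, by omega⟩ (by simp [Fin.lt_def]; omega) hadj_0n q hq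
  -- descending chain: count of j is at most count of 2, for 2 ≤ j ≤ n
  have hchain : ∀ (j : ℕ), 2 ≤ j → ∀ (hj : j ≤ n), ∀ (q : List (Fin (n+1))), q <+: w →
      q.count ⟨j, by omega⟩ ≤ q.count ⟨2, by omega⟩ := by
    intro j hj2
    induction j, hj2 using Nat.le_induction with
    | base => intro _ q hq; exact le_refl _
    | succ j hj2 ih =>
      intro hj1 q hq
      have h1 := (hstep j (by omega) q hq).1
      have h2 := ih (by omega) q hq
      exact le_trans h1 h2
  -- prefix-count condition for the non-adjacent pair (0, 2)
  have h02 : ∀ (q : List (Fin (n+1))), q <+: w →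
      q.count ⟨2, by omega⟩ ≤ q.count ⟨0, by omega⟩ ∧
      q.count ⟨0, by omega⟩ ≤ q.count ⟨2, by omega⟩ + 1 := by
    intro q hq
    constructor
    · exact le_trans (hstep 1 (by omega) q hq).1 (hstep 0 (by omega) q hq).1
    · have h1 := (h0n q hq).2
      have h2 := hchain n (by omega) (le_refl n) q hq
      exact le_trans h1 (Nat.add_le_add_right h2 1)
  -- hence 0 and 2 alternate in w
  have hne02 : (⟨0, by omega⟩ : Fin (n+1)) ≠ ⟨2, by omega⟩ := by
    simp [Fin.ext_iff]
  have hch02 : (w.filter (altP (⟨0, by omega⟩ : Fin (n+1)) ⟨2, by omega⟩)).Chain' (· ≠ ·) := by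
    apply count_chain' hne02
    · intro z hz
      exact altP_iff.mp (List.of_mem_filter hz)
    · intro q' hq'
      obtain ⟨q, hq, rfl⟩ := prefix_filter_exists _ w q' hq'
      have := h02 q hq
      rw [List.count_filter (altP_iff.mpr (Or.inr rfl)),
        List.count_filter (altP_iff.mpr (Or.inl rfl))]
      exact this
  have halt02 : Alternate w ⟨0, by omega⟩ ⟨2, by omega⟩ := by
    rw [alternate_def]
    exact ⟨hrep2.1 _, hrep2.1 _, hch02⟩
  have hadj02 := (hrep2.2 _ _ hne02).mp halt02
  -- but 0 and 2 are not adjacent in the cycle graph, for n ≥ 3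
  rw [SimpleGraph.cycleGraph_adj'] at hadj02
  rcases hadj02 with h | h
  · rw [Fin.sub_def] at h
    simp only at h
    have : (n + 1 - 2 + 0) % (n + 1) = n - 1 := by
      have h2 : n + 1 - 2 + 0 = n - 1 := by omega
      rw [h2]
      exact Nat.mod_eq_of_lt (by omega)
    omega
  · rw [Fin.sub_def] at h
    simp only at h
    have : (n + 1 - 0 + 2) % (n + 1) = 2 := by
      have h2 : n + 1 - 0 + 2 = (n + 1) + 2 := by omega
      rw [h2, Nat.add_mod_left]
      exact Nat.mod_eq_of_lt (by omega)
    omega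
end

section
/- Let u be a uniform word-representant of a simple graph G, and let a, b, c be three distinct vertices of G such that a is adjacent to b, a is adjacent to c, and b is not adjacent to c. Then, regarding u as a cyclic word, there exist two cyclically consecutive occurrences of a between which b occurs before c, and there also exist two cyclically consecutive occurrences of a between which c occurs before b. -/
open Classical

/-- Regarding `u` as a cyclic word, `s` is the segment lying strictly between two cyclically
consecutive occurrences of the letter `a`: some cyclic rotation of `u` has the form
`a :: s ++ a :: t'` where `a ∉ s` (two distinct cyclically consecutive occurrences of `a`),
or the form `a :: s` with `a ∉ s` (then `a` occurs exactly once, and the cyclic interval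
from that occurrence around to itself is `s`). -/
def IsCyclicGap {V : Type*} (u : List V) (a : V) (s : List V) : Prop :=
  ∃ (i : ℕ) (t : List V), u.rotate i = a :: (s ++ t) ∧ a ∉ s ∧
    (t = [] ∨ ∃ t' : List V, t = a :: t')

/-- In the segment `s`, some occurrence of the letter `b` precedes some occurrence of the
letter `c`. -/
def OccursBefore {V : Type*} (s : List V) (b c : V) : Prop :=
  ∃ s₁ s₂ s₃ : List V, s = s₁ ++ b :: (s₂ ++ c :: s₃)

namespace WRGap
set_option linter.unusedSectionVars false
variable {V : Type*} [DecidableEq V]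

lemma parity {a y : V} (hay : a ≠ y) :
    ∀ (n : ℕ) (l₀ : List V), l₀.length = n →
    (a :: (l₀ ++ [a])).Chain' (· ≠ ·) →
    (∀ z ∈ l₀, z = a ∨ z = y) →
    (a :: (l₀ ++ [a])).count a = (a :: (l₀ ++ [a])).count y + 1 := by
  intro n
  induction n using Nat.strong_induction_on with
  | _ n ih =>
    intro l₀ hlen hch helem
    obtain _ | ⟨z, _ | ⟨w, l₂⟩⟩ := l₀
    · exfalso
      simp [List.isChain_cons_cons, List.Chain'] at hch
    · have hz : z = y := by
        have haz : a ≠ z := (List.isChain_cons_cons.1 hch).1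
        rcases helem z (by simp) with h | h
        · exact absurd h.symm haz
        · exact h
      obtain rfl : y = z := hz.symm
      simp [List.count_cons, hay, hay.symm, Ne.symm hay]
    · have hz : z = y := by
        have haz : a ≠ z := (List.isChain_cons_cons.1 hch).1
        rcases helem z (by simp) with h | h
        · exact absurd h.symm haz
        · exact h
      obtain rfl : y = z := hz.symm
      have hw : w = a := by
        have hyw : y ≠ w := (List.isChain_cons_cons.1 (List.isChain_cons_cons.1 hch).2).1
        rcases helem w (by simp) with h | h
        · exact h
        · exact absurd h.symm hyw
      obtain rfl : a = w := hw.symm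
      have hch' : (a :: (l₂ ++ [a])).Chain' (· ≠ ·) := by
        have h1 := (List.isChain_cons_cons.1 hch).2
        have h2 := (List.isChain_cons_cons.1 h1).2
        simpa [List.Chain'] using h2
      have hel' : ∀ z ∈ l₂, z = a ∨ z = y := fun z hz => helem z (by simp [hz])
      have hlt : l₂.length < n := by simp at hlen; omega
      have := ih l₂.length hlt l₂ rfl hch' hel'
      simp [List.count_cons, hay, hay.symm, Ne.symm hay] at this ⊢
      omega

lemma mem_takeWhile_of_filter_head {a y : V} (hya : y ≠ a) (q : V → Bool)
    (hq : ∀ z, q z = true ↔ (z = a ∨ z = y)) :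
    ∀ l : List V, ((l.filter q).head? = some y) →
      y ∈ l.takeWhile fun z => decide (¬ z = a) := by
  intro l
  induction l with
  | nil => simp
  | cons z l ih =>
    intro h
    by_cases hzy : z = y
    · subst hzy
      rw [List.takeWhile_cons_of_pos (by simp [hya])]
      exact List.mem_cons_self
    · by_cases hza : z = a
      · subst hza
        rw [List.filter_cons_of_pos ((hq z).2 (Or.inl rfl))] at h
        simp at h
        exact absurd h.symm hya
      · have hqz : ¬ q z = true := fun hqz => by
          rcases (hq z).1 hqz with h' | h'
          · exact hza h'
          · exact hzy h'
        rw [List.filter_cons_of_neg hqz] at h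
        rw [List.takeWhile_cons_of_pos (by simp [hza])]
        exact List.mem_cons_of_mem _ (ih h)

lemma exists_pair (p : V → Bool) :
    ∀ l : List V, ¬ (l.filter p).Chain' (· ≠ ·) →
    ∃ (l₁ : List V) (x : V) (l₂ l₃ : List V),
      l = l₁ ++ x :: (l₂ ++ x :: l₃) ∧ p x = true ∧ ∀ z ∈ l₂, p z = false := by
  intro l
  induction l with
  | nil => intro h; simp [List.Chain'] at h
  | cons z l ih =>
    intro h
    by_cases hz : p z
    · rw [List.filter_cons_of_pos hz] at h
      by_cases hc : (l.filter p).Chain' (· ≠ ·)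
      · have hne : ¬ (∀ w ∈ (l.filter p).head?, z ≠ w) := fun hw =>
          h (List.isChain_cons.2 ⟨hw, hc⟩)
        push_neg at hne
        obtain ⟨w, hw, hzw⟩ := hne
        rcases hf : l.filter p with _ | ⟨w', f'⟩
        · rw [hf] at hw; simp at hw
        · rw [hf] at hw
          simp at hw
          subst hw
          rw [List.filter_eq_cons_iff] at hf
          obtain ⟨l₂, l₃, hl, hl₂, hpw, -⟩ := hf
          refine ⟨[], z, l₂, l₃, ?_, hz, ?_⟩
          · rw [hl, hzw]; simp
          · intro v hv
            simpa using hl₂ v hv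
      · obtain ⟨l₁, x, l₂, l₃, hdec, hpx, hl₂⟩ := ih hc
        exact ⟨z :: l₁, x, l₂, l₃, by rw [hdec]; simp, hpx, hl₂⟩
    · rw [List.filter_cons_of_neg (by simpa using hz)] at h
      obtain ⟨l₁, x, l₂, l₃, hdec, hpx, hl₂⟩ := ih h
      exact ⟨z :: l₁, x, l₂, l₃, by rw [hdec]; simp, hpx, hl₂⟩

lemma dropWhile_eq_cons (pr : V → Bool) :
    ∀ (l l' : List V) (w : V), l.dropWhile pr = w :: l' → pr w = false := by
  intro l
  induction l with
  | nil => intro l' w h; simp at h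
  | cons z l ih =>
    intro l' w h
    by_cases hz : pr z
    · rw [List.dropWhile_cons_of_pos hz] at h
      exact ih _ _ h
    · rw [List.dropWhile_cons_of_neg hz] at h
      injection h with h1 h2
      subst h1
      simpa using hz

lemma alternate_reverse {w : List V} {x y : V} (h : Alternate w x y) :
    Alternate w.reverse x y := by
  obtain ⟨hx, hy, hc⟩ := h
  refine ⟨List.mem_reverse.2 hx, List.mem_reverse.2 hy, ?_⟩
  rw [List.filter_reverse, List.Chain', List.isChain_reverse]
  exact hc.imp fun a b h e => h e.symm

lemma occursBefore_reverse {s : List V} {b c : V} (h : OccursBefore s b c) :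
    OccursBefore s.reverse c b := by
  obtain ⟨s₁, s₂, s₃, rfl⟩ := h
  exact ⟨s₃.reverse, s₂.reverse, s₁.reverse, by simp⟩

lemma isCyclicGap_reverse {u : List V} {a : V} {s : List V} (h : IsCyclicGap u a s) :
    IsCyclicGap u.reverse a s.reverse := by
  obtain ⟨i, t, hrot, has, ht⟩ := h
  have hu : u ~r a :: (s ++ t) := ⟨i, hrot⟩
  have has' : a ∉ s.reverse := by simpa using has
  rcases ht with rfl | ⟨t', rfl⟩
  · have h1 : u.reverse ~r (a :: (s ++ [])).reverse := hu.reverse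
    have h2 : (a :: (s ++ ([] : List V))).reverse = s.reverse ++ [a] := by simp
    have h3 : u.reverse ~r a :: (s.reverse ++ []) := by
      rw [h2] at h1
      refine h1.trans ?_
      simpa using (List.isRotated_append (l := s.reverse) (l' := [a]))
    obtain ⟨j, hj⟩ := h3
    exact ⟨j, [], hj, has', Or.inl rfl⟩
  · have h1 : u.reverse ~r (a :: (s ++ a :: t')).reverse := hu.reverse
    have h2 : (a :: (s ++ a :: t')).reverse
        = t'.reverse ++ (a :: (s.reverse ++ [a])) := by simp
    have h3 : u.reverse ~r a :: (s.reverse ++ (a :: t'.reverse)) := by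
      rw [h2] at h1
      refine h1.trans ?_
      have := List.isRotated_append (l := t'.reverse) (l' := a :: (s.reverse ++ [a]))
      refine this.trans ?_
      have he : a :: (s.reverse ++ [a]) ++ t'.reverse
          = a :: (s.reverse ++ a :: t'.reverse) := by simp
      rw [he]
    obtain ⟨j, hj⟩ := h3
    exact ⟨j, a :: t'.reverse, hj, has', Or.inr ⟨t'.reverse, rfl⟩⟩

lemma main_aux (u : List V) (a x y : V) (p q : V → Bool)
    (hp : ∀ z, p z = true ↔ (z = a ∨ z = x))
    (hq : ∀ z, q z = true ↔ (z = a ∨ z = y))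
    (hax : a ≠ x) (hay : a ≠ y) (hxy : x ≠ y)
    (hchx : (u.filter p).Chain' (· ≠ ·)) (hchy : (u.filter q).Chain' (· ≠ ·))
    (hyu : y ∈ u)
    (hcnt : u.count a = u.count y)
    (u₁ u₂ u₃ : List V) (hu : u = u₁ ++ x :: (u₂ ++ x :: u₃))
    (hu₂ : ∀ z ∈ u₂, z ≠ x ∧ z ≠ y) :
    ∃ s : List V, IsCyclicGap u a s ∧ OccursBefore s x y := by
  have hpx : p x = true := (hp x).2 (Or.inr rfl)
  have hpa : p a = true := (hp a).2 (Or.inl rfl)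
  have hqa : q a = true := (hq a).2 (Or.inl rfl)
  have hqy : q y = true := (hq y).2 (Or.inr rfl)
  have hqx : ¬ q x = true := fun h => by
    rcases (hq x).1 h with h' | h'
    · exact hax h'.symm
    · exact hxy h'
  have hfu : u.filter p = u₁.filter p ++ (x :: (u₂.filter p ++ x :: u₃.filter p)) := by
    rw [hu]
    simp [List.filter_append, List.filter_cons_of_pos hpx]
  have hmem2 : ∀ z ∈ u₂.filter p, z = a := by
    intro z hz
    have h1 := (hp z).1 (List.of_mem_filter hz)
    have h2 := (hu₂ z (List.mem_of_mem_filter hz)).1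
    tauto
  have hch2 : (x :: (u₂.filter p ++ x :: u₃.filter p)).Chain' (· ≠ ·) := by
    rw [hfu] at hchx
    exact hchx.right_of_append
  have hfil2 : u₂.filter p = [a] := by
    rcases h2 : u₂.filter p with _ | ⟨z1, _ | ⟨z2, rest⟩⟩
    · exfalso
      rw [h2] at hch2
      simp [List.isChain_cons_cons, List.Chain'] at hch2
    · rw [hmem2 z1 (by rw [h2]; exact List.mem_cons_self)]
    · exfalso
      rw [h2] at hch2
      simp only [List.cons_append] at hch2
      have hz1 : z1 = a := hmem2 z1 (by rw [h2]; simp)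
      have hz2 : z2 = a := hmem2 z2 (by rw [h2]; simp)
      exact (List.isChain_cons_cons.1 (List.isChain_cons_cons.1 hch2).2).1 (hz1.trans hz2.symm)
  obtain ⟨v₁, v₂, hv, hv₁, -, hv₂nil⟩ := List.filter_eq_cons_iff.1 hfil2
  have hv₂ : ∀ z ∈ v₂, ¬ p z = true := List.filter_eq_nil_iff.1 hv₂nil
  set A := u₁ ++ x :: v₁ with hA
  have hu' : u = A ++ a :: (v₂ ++ x :: u₃) := by rw [hu, hv, hA]; simp
  have hfqv₂ : v₂.filter q = [] := by
    refine List.filter_eq_nil_iff.2 (fun z hz hqz => ?_)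
    have h2 := (hu₂ z (by rw [hv]; simp [hz])).2
    rcases (hq z).1 hqz with h' | h'
    · exact hv₂ z hz ((hp z).2 (Or.inl h'))
    · exact h2 h'
  have hfq : u.filter q = A.filter q ++ (a :: u₃.filter q) := by
    rw [hu']
    simp [List.filter_append, List.filter_cons_of_pos, List.filter_cons_of_neg, hqa, hqx, hfqv₂]
  have key : ((u₃ ++ A).filter q).head? = some y := by
    have hq3A : (u₃ ++ A).filter q = u₃.filter q ++ A.filter q := List.filter_append _ _
    rcases h3 : u₃.filter q with _ | ⟨z, g₃'⟩
    · have hfu' : u.filter q = A.filter q ++ [a] := by rw [hfq, h3]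
      have hyu' : y ∈ u.filter q := List.mem_filter.2 ⟨hyu, hqy⟩
      have hygA : y ∈ A.filter q := by
        rw [hfu'] at hyu'
        rcases List.mem_append.1 hyu' with h | h
        · exact h
        · simp at h; exact absurd h.symm hay
      rcases hgA : A.filter q with _ | ⟨w, gA'⟩
      · rw [hgA] at hygA; simp at hygA
      · have hwmem : w = a ∨ w = y := by
          have hw : w ∈ A.filter q := by rw [hgA]; exact List.mem_cons_self
          exact (hq w).1 (List.of_mem_filter hw)
        rcases hwmem with hw | hw
        · exfalso
          obtain rfl : a = w := hw.symm
          have hsh : u.filter q = a :: (gA' ++ [a]) := by rw [hfu', hgA]; simp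
          have hel : ∀ z ∈ gA', z = a ∨ z = y := by
            intro z hz
            have hz' : z ∈ u.filter q := by rw [hfu', hgA]; simp [hz]
            exact (hq z).1 (List.of_mem_filter hz')
          have hch : (a :: (gA' ++ [a])).Chain' (· ≠ ·) := by
            rw [← hsh]; exact hchy
          have hpar := parity hay gA'.length gA' rfl hch hel
          have hca : (u.filter q).count a = u.count a := List.count_filter hqa
          have hcy : (u.filter q).count y = u.count y := List.count_filter hqy
          rw [hsh] at hca hcy
          omega
        · rw [hq3A, h3, hgA, hw]; simp
    · have hzmem : z = a ∨ z = y := by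
        have hz : z ∈ u₃.filter q := by rw [h3]; exact List.mem_cons_self
        exact (hq z).1 (List.of_mem_filter hz)
      have haz : a ≠ z := by
        have hch : (a :: z :: g₃').Chain' (· ≠ ·) := by
          rw [hfq, h3] at hchy
          exact hchy.right_of_append
        exact (List.isChain_cons_cons.1 hch).1
      have hz : z = y := hzmem.resolve_left fun h => haz h.symm
      rw [hq3A, h3, hz]; simp
  have hyTW : y ∈ (u₃ ++ A).takeWhile (fun z => decide (¬ z = a)) :=
    mem_takeWhile_of_filter_head hay.symm q hq _ key
  obtain ⟨X, Y, hXY⟩ := List.append_of_mem hyTW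
  set tw := (u₃ ++ A).takeWhile (fun z => decide (¬ z = a)) with htw
  set dw := (u₃ ++ A).dropWhile (fun z => decide (¬ z = a)) with hdw
  refine ⟨v₂ ++ x :: tw, ?_, v₂, X, Y, by rw [hXY]⟩
  have hrot : u ~r a :: ((v₂ ++ x :: tw) ++ dw) := by
    have h2 : tw ++ dw = u₃ ++ A := List.takeWhile_append_dropWhile
    have h1 : a :: ((v₂ ++ x :: tw) ++ dw) = (a :: (v₂ ++ x :: u₃)) ++ A := by
      simp [List.append_assoc, h2]
    rw [h1, hu']
    exact List.isRotated_append
  obtain ⟨i, hi⟩ := hrot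
  refine ⟨i, dw, hi, ?_, ?_⟩
  · intro hmem
    rcases List.mem_append.1 hmem with h | h
    · exact hv₂ a h hpa
    · rcases List.mem_cons.1 h with h | h
      · exact hax h
      · have h' := List.mem_takeWhile_imp h
        simp at h'
  · rcases hdd : dw with _ | ⟨w, dw'⟩
    · exact Or.inl rfl
    · right
      refine ⟨dw', ?_⟩
      have hwf : (fun z => decide (¬ z = a)) w = false := by
        refine dropWhile_eq_cons (fun z => decide (¬ z = a)) (u₃ ++ A) dw' w ?_
        rw [← hdw]
        exact hdd
      have hwa : w = a := by simpa using hwf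
      rw [hwa]

end WRGap

open WRGap

/-- If `u` is a uniform word-representant of `G` and `a, b, c` are distinct vertices with
`a` adjacent to both `b` and `c` but `b` not adjacent to `c`, then (viewing `u` as a cyclic
word) there are two cyclically consecutive occurrences of `a` between which `b` occurs
before `c`, and two cyclically consecutive occurrences of `a` between which `c` occurs
before `b`. -/
theorem exists_gap_orders_of_adj_adj_not_adj
    {V : Type*} [DecidableEq V] (G : SimpleGraph V) (u : List V) (k : ℕ) (hk : 1 ≤ k)
    (huniform : ∀ v : V, u.count v = k) (hrep : Represents G u)
    (a b c : V) (hbc' : b ≠ c)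
    (hab : G.Adj a b) (hac : G.Adj a c) (hbc : ¬ G.Adj b c) :
    (∃ s : List V, IsCyclicGap u a s ∧ OccursBefore s b c) ∧
    (∃ s : List V, IsCyclicGap u a s ∧ OccursBefore s c b) := by
  have hab' : a ≠ b := G.ne_of_adj hab
  have hac' : a ≠ c := G.ne_of_adj hac
  have hAab : Alternate u a b := (hrep.2 a b hab').2 hab
  have hAac : Alternate u a c := (hrep.2 a c hac').2 hac
  have hAabr : Alternate u.reverse a b := alternate_reverse hAab
  have hAacr : Alternate u.reverse a c := alternate_reverse hAac
  have hbu : b ∈ u := hrep.1 b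
  have hcu : c ∈ u := hrep.1 c
  have hbur : b ∈ u.reverse := List.mem_reverse.2 hbu
  have hcur : c ∈ u.reverse := List.mem_reverse.2 hcu
  have hcnt_ab : u.count a = u.count b := by rw [huniform, huniform]
  have hcnt_ac : u.count a = u.count c := by rw [huniform, huniform]
  have hcnt_abr : u.reverse.count a = u.reverse.count b := by
    rw [List.count_reverse, List.count_reverse]; exact hcnt_ab
  have hcnt_acr : u.reverse.count a = u.reverse.count c := by
    rw [List.count_reverse, List.count_reverse]; exact hcnt_ac
  have hnC := fun hC => hbc ((hrep.2 b c hbc').1 ⟨hbu, hcu, hC⟩)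
  obtain ⟨l₁, x, l₂, l₃, hdec, hpx, hl₂⟩ := exists_pair _ u hnC
  have hxbc : x = b ∨ x = c := by simpa using hpx
  have hl₂' : ∀ z ∈ l₂, z ≠ b ∧ z ≠ c := by
    intro z hz
    have h' : ¬ (z = b ∨ z = c) := by simpa using hl₂ z hz
    exact ⟨fun h => h' (Or.inl h), fun h => h' (Or.inr h)⟩
  have hrevdec : u.reverse = l₃.reverse ++ x :: (l₂.reverse ++ x :: l₁.reverse) := by
    rw [hdec]; simp
  have hl₂rev : ∀ z ∈ l₂.reverse, z ≠ b ∧ z ≠ c := fun z hz => hl₂' z (List.mem_reverse.1 hz)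
  obtain ⟨-, -, hchab⟩ := hAab
  obtain ⟨-, -, hchac⟩ := hAac
  obtain ⟨-, -, hchabr⟩ := hAabr
  obtain ⟨-, -, hchacr⟩ := hAacr
  rcases hxbc with rfl | rfl
  · constructor
    · exact main_aux u a x c _ _ (fun z => by simp) (fun z => by simp)
        hab' hac' hbc' hchab hchac hcu hcnt_ac l₁ l₂ l₃ hdec hl₂'
    · obtain ⟨s', hgap', hocc'⟩ := main_aux u.reverse a x c _ _
        (fun z => by simp) (fun z => by simp)
        hab' hac' hbc' hchabr hchacr hcur hcnt_acr
        l₃.reverse l₂.reverse l₁.reverse hrevdec hl₂rev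
      exact ⟨s'.reverse, by simpa using isCyclicGap_reverse hgap', occursBefore_reverse hocc'⟩
  · constructor
    · obtain ⟨s', hgap', hocc'⟩ := main_aux u.reverse a x b _ _
        (fun z => by simp) (fun z => by simp)
        hac' hab' hbc'.symm hchacr hchabr hbur hcnt_abr
        l₃.reverse l₂.reverse l₁.reverse hrevdec
        (fun z hz => ⟨(hl₂rev z hz).2, (hl₂rev z hz).1⟩)
      exact ⟨s'.reverse, by simpa using isCyclicGap_reverse hgap', occursBefore_reverse hocc'⟩
    · exact main_aux u a x b _ _ (fun z => by simp) (fun z => by simp)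
        hac' hab' hbc'.symm hchac hchab hbu hcnt_ab l₁ l₂ l₃ hdec
        (fun z hz => ⟨(hl₂' z hz).2, (hl₂' z hz).1⟩)
end

section
/- Let u be a uniform word-representant of a simple graph G, and let a, b, c be three distinct, pairwise adjacent vertices of G. Then, regarding u as a cyclic word, exactly one of the following holds: (i) between every pair of cyclically consecutive occurrences of a, the letter b occurs before the letter c; (ii) between every pair of cyclically consecutive occurrences of a, the letter c occurs before the letter b. -/
open Classical

set_option linter.unusedSectionVars false

namespace GapAux

variable {V : Type*} [DecidableEq V]

abbrev p2 (x y : V) : V → Bool := fun z => decide (z = x ∨ z = y)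

lemma decide_irrel {p : Prop} (i1 i2 : Decidable p) : @decide p i1 = @decide p i2 := by
  by_cases hp : p
  · exact (@decide_eq_true p i1 hp).trans (@decide_eq_true p i2 hp).symm
  · exact (@decide_eq_false p i1 hp).trans (@decide_eq_false p i2 hp).symm

lemma filter_decide_congr (x y : V) (w : List V) (inst : ∀ z : V, Decidable (z = x ∨ z = y)) :
    (w.filter fun z => @decide (z = x ∨ z = y) (inst z)) = w.filter (p2 x y) :=
  List.filter_congr fun z _ => decide_irrel _ _

lemma chain_of_alternate' {x y : V} {w : List V} (inst : ∀ z : V, Decidable (z = x ∨ z = y))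
    (hch : (w.filter fun z => @decide (z = x ∨ z = y) (inst z)).Chain' (· ≠ ·)) :
    (w.filter (p2 x y)).Chain' (· ≠ ·) := by
  rwa [filter_decide_congr x y w inst] at hch


@[simp] lemma p2_apply (x y z : V) : p2 x y z = decide (z = x ∨ z = y) := rfl

def rep2 (x y : V) : ℕ → List V
  | 0 => []
  | k+1 => x :: y :: rep2 x y k

def rep3 (x y w : V) : ℕ → List V
  | 0 => []
  | k+1 => x :: y :: w :: rep3 x y w k

lemma mem_rep2 {x y z : V} : ∀ {k : ℕ}, z ∈ rep2 x y k → z = x ∨ z = y := by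
  intro k
  induction k with
  | zero => intro h; simp [rep2] at h
  | succ k ih =>
    intro h
    simp only [rep2, List.mem_cons] at h
    rcases h with rfl | rfl | h
    · exact Or.inl rfl
    · exact Or.inr rfl
    · exact ih h

lemma count_rep2_left {x y : V} (hxy : x ≠ y) : ∀ k, (rep2 x y k).count x = k := by
  intro k
  induction k with
  | zero => rfl
  | succ k ih => simp [rep2, List.count_cons, ih, hxy, Ne.symm hxy]

lemma count_rep2_right {x y : V} (hxy : x ≠ y) : ∀ k, (rep2 x y k).count y = k := by
  intro k
  induction k with
  | zero => rfl
  | succ k ih => simp [rep2, List.count_cons, ih, hxy, Ne.symm hxy]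

lemma head?_rep2 (x y : V) (k : ℕ) : (rep2 x y (k+1)).head? = some x := rfl

lemma getLast?_rep2 (x y : V) : ∀ k, (rep2 x y (k+1)).getLast? = some y := by
  intro k
  induction k with
  | zero => rfl
  | succ k ih =>
    show (x :: y :: rep2 x y (k+1)).getLast? = some y
    rw [List.getLast?_cons_cons]
    cases k with
    | zero => rfl
    | succ m =>
      show (y :: x :: y :: rep2 x y m).getLast? = some y
      rw [List.getLast?_cons_cons]
      exact ih

lemma chain'_rep2_aux {x y : V} (hxy : x ≠ y) :
    ∀ k, ((rep2 x y k).Chain' (· ≠ ·)) ∧ ((y :: rep2 x y k).Chain' (· ≠ ·)) := by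
  intro k
  induction k with
  | zero => exact ⟨List.isChain_nil, List.isChain_singleton _⟩
  | succ k ih =>
    refine ⟨List.isChain_cons_cons.mpr ⟨hxy, ih.2⟩, ?_⟩
    exact List.isChain_cons_cons.mpr ⟨Ne.symm hxy, List.isChain_cons_cons.mpr ⟨hxy, ih.2⟩⟩

lemma chain'_rep2 {x y : V} (hxy : x ≠ y) (k : ℕ) : (rep2 x y k).Chain' (· ≠ ·) :=
  (chain'_rep2_aux hxy k).1

lemma alt_step (k : ℕ)
    (ih : ∀ (w : List V) (x y : V), x ≠ y → (∀ z ∈ w, z = x ∨ z = y) → w.Chain' (· ≠ ·) →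
      w.count x = k → w.count y = k → w = rep2 x y k ∨ w = rep2 y x k)
    (w : List V) (x y : V) (hxy : x ≠ y)
    (hmem : ∀ z ∈ w, z = x ∨ z = y) (hch : w.Chain' (· ≠ ·))
    (hcx : w.count x = k+1) (hcy : w.count y = k+1)
    (hhead : w.head? = some x) :
    w = rep2 x y (k+1) := by
  cases w with
  | nil => simp at hhead
  | cons z w1 =>
    have hz : z = x := by simpa using hhead
    cases w1 with
    | nil =>
      rw [hz] at hcy
      simp [List.count_cons, hxy] at hcy
    | cons z' w2 =>
      have hz' : z' = y := by
        rcases hmem z' (by simp) with h | h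
        · exact absurd (hz.trans h.symm) (List.isChain_cons_cons.mp hch).1
        · exact h
      rw [hz, hz'] at hch hcx hcy
      have hch2 : w2.Chain' (· ≠ ·) := ((List.isChain_cons_cons.mp hch).2).tail
      have hcx2 : w2.count x = k := by
        simp [List.count_cons, hxy, Ne.symm hxy] at hcx
        omega
      have hcy2 : w2.count y = k := by
        simp [List.count_cons, hxy, Ne.symm hxy] at hcy
        omega
      have hmem2 : ∀ v ∈ w2, v = x ∨ v = y := fun v hv => hmem v (by simp [hv])
      rw [hz, hz']
      rcases ih w2 x y hxy hmem2 hch2 hcx2 hcy2 with h2 | h2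
      · rw [rep2, h2]
      · cases k with
        | zero => rw [rep2, h2]; rfl
        | succ m =>
          exfalso
          rw [h2] at hch
          have : y ≠ y := (List.isChain_cons_cons.mp ((List.isChain_cons_cons.mp hch).2)).1
          exact this rfl

lemma alt_classify : ∀ (k : ℕ) (w : List V) (x y : V), x ≠ y →
    (∀ z ∈ w, z = x ∨ z = y) → w.Chain' (· ≠ ·) →
    w.count x = k → w.count y = k →
    w = rep2 x y k ∨ w = rep2 y x k := by
  intro k
  induction k with
  | zero =>
    intro w x y hxy hmem _ hcx hcy
    left
    cases w with
    | nil => rfl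
    | cons z w' =>
      exfalso
      rcases hmem z (by simp) with rfl | rfl
      · simp [List.count_cons] at hcx
      · simp [List.count_cons] at hcy
  | succ k ih =>
    intro w x y hxy hmem hch hcx hcy
    cases w with
    | nil => simp at hcx
    | cons z w1 =>
      rcases hmem z (by simp) with rfl | rfl
      · exact Or.inl (alt_step k ih _ z y hxy hmem hch hcx hcy rfl)
      · refine Or.inr (alt_step k ih _ z x (Ne.symm hxy) ?_ hch hcy hcx rfl)
        intro w hw
        exact (hmem w hw).symm

lemma swap_rep2 {x y : V} (hxy : x ≠ y) {k : ℕ} {p q : List V}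
    (h : p ++ q = rep2 x y k) : q ++ p = rep2 x y k ∨ q ++ p = rep2 y x k := by
  rcases eq_or_ne p [] with rfl | hp
  · left; simpa using h
  rcases eq_or_ne q [] with rfl | hq
  · left; rw [List.nil_append]; rw [List.append_nil] at h; exact h
  cases k with
  | zero => exact absurd (List.append_eq_nil_iff.mp h).1 hp
  | succ m =>
    have hch : (p ++ q).Chain' (· ≠ ·) := h ▸ chain'_rep2 hxy (m+1)
    obtain ⟨hchp, hchq, _⟩ := List.isChain_append.mp hch
    have hlast : q.getLast? = some y := by
      rw [← List.getLast?_append_of_ne_nil p hq, h, getLast?_rep2]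
    have hhead : p.head? = some x := by
      rw [← List.head?_append_of_ne_nil p hp, h, head?_rep2]
    have hch' : (q ++ p).Chain' (· ≠ ·) := by
      apply List.isChain_append.mpr
      refine ⟨hchq, hchp, ?_⟩
      intro u hu v hv
      rw [hlast] at hu; rw [hhead] at hv
      simp only [Option.mem_def, Option.some.injEq] at hu hv
      rw [← hu, ← hv]
      exact Ne.symm hxy
    have hmem : ∀ z ∈ q ++ p, z = x ∨ z = y := by
      intro z hz
      apply mem_rep2 (k := m+1) (x := x) (y := y)
      rw [← h]
      rcases List.mem_append.mp hz with h' | h'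
      · exact List.mem_append.mpr (Or.inr h')
      · exact List.mem_append.mpr (Or.inl h')
    have hcx : (q ++ p).count x = m+1 := by
      rw [List.count_append, Nat.add_comm, ← List.count_append, h, count_rep2_left hxy]
    have hcy : (q ++ p).count y = m+1 := by
      rw [List.count_append, Nat.add_comm, ← List.count_append, h, count_rep2_right hxy]
    exact alt_classify (m+1) (q ++ p) x y hxy hmem hch' hcx hcy

lemma rep3_append (x y w : V) : ∀ m n, rep3 x y w m ++ rep3 x y w n = rep3 x y w (m + n) := by
  intro m n
  induction m with
  | zero => simp [rep3]
  | succ m ih =>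
    show x :: y :: w :: (rep3 x y w m ++ rep3 x y w n) = _
    rw [ih]
    rw [show m + 1 + n = (m + n) + 1 by omega]
    rfl

lemma prefix_rep3 (x y w : V) : ∀ (k : ℕ) (p q : List V), p ++ q = rep3 x y w k →
    (∃ j m, k = j + m ∧ p = rep3 x y w j ∧ q = rep3 x y w m) ∨
    (∃ j m, k = j + m + 1 ∧ p = rep3 x y w j ++ [x] ∧ q = y :: w :: rep3 x y w m) ∨
    (∃ j m, k = j + m + 1 ∧ p = rep3 x y w j ++ [x, y] ∧ q = w :: rep3 x y w m) := by
  intro k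
  induction k with
  | zero =>
    intro p q h
    rw [show rep3 x y w 0 = [] from rfl] at h
    obtain ⟨hp, hq⟩ := List.append_eq_nil_iff.mp h
    exact Or.inl ⟨0, 0, rfl, hp, hq⟩
  | succ k ih =>
    intro p q h
    rcases p with _ | ⟨z, (_ | ⟨z', (_ | ⟨z'', p₃⟩)⟩)⟩
    · exact Or.inl ⟨0, k+1, by omega, rfl, by simpa using h⟩
    · rw [show rep3 x y w (k+1) = x :: y :: w :: rep3 x y w k from rfl] at h
      simp only [List.cons_append, List.nil_append, List.cons.injEq] at h
      obtain ⟨rfl, hq⟩ := h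
      exact Or.inr (Or.inl ⟨0, k, by omega, rfl, hq⟩)
    · rw [show rep3 x y w (k+1) = x :: y :: w :: rep3 x y w k from rfl] at h
      simp only [List.cons_append, List.nil_append, List.cons.injEq] at h
      obtain ⟨rfl, rfl, hq⟩ := h
      exact Or.inr (Or.inr ⟨0, k, by omega, rfl, hq⟩)
    · rw [show rep3 x y w (k+1) = x :: y :: w :: rep3 x y w k from rfl] at h
      simp only [List.cons_append, List.cons.injEq] at h
      obtain ⟨rfl, rfl, rfl, h₃⟩ := h
      rcases ih p₃ q h₃ with ⟨j, m, hk, hp, hq⟩ | ⟨j, m, hk, hp, hq⟩ | ⟨j, m, hk, hp, hq⟩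
      · exact Or.inl ⟨j+1, m, by omega, by rw [hp]; rfl, hq⟩
      · exact Or.inr (Or.inl ⟨j+1, m, by omega, by rw [hp]; rfl, hq⟩)
      · exact Or.inr (Or.inr ⟨j+1, m, by omega, by rw [hp]; rfl, hq⟩)

lemma swap_rep3 {x y w : V} {k : ℕ} {p q : List V} (h : p ++ q = rep3 x y w k)
    (hy : (q ++ p).head? ≠ some y) (hw : (q ++ p).head? ≠ some w) :
    q ++ p = rep3 x y w k := by
  rcases prefix_rep3 x y w k p q h with ⟨j, m, hk, hp, hq⟩ | ⟨j, m, hk, hp, hq⟩ | ⟨j, m, hk, hp, hq⟩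
  · rw [hp, hq, rep3_append, hk, Nat.add_comm]
  · exact absurd (by rw [hq]; rfl) hy
  · exact absurd (by rw [hq]; rfl) hw

lemma filter_sub (p q : V → Bool) (hpq : ∀ z, p z = true → q z = true) (l : List V) :
    (l.filter q).filter p = l.filter p := by
  rw [List.filter_filter]
  apply List.filter_congr
  intro z _
  cases hp : p z with
  | false => simp
  | true => simp [hpq z hp]

lemma filter_rep3_bc {a b c : V} (hab : a ≠ b) (hac : a ≠ c) :
    ∀ k, (rep3 a b c k).filter (p2 b c) = rep2 b c k := by
  intro k
  induction k with
  | zero => rfl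
  | succ k ih =>
    show List.filter _ (a :: b :: c :: rep3 a b c k) = _
    rw [List.filter_cons_of_neg (by simp [p2, hab, hac]),
        List.filter_cons_of_pos (by simp [p2]),
        List.filter_cons_of_pos (by simp [p2]), ih]
    rfl

lemma triple_classify {a b c : V} (hab : a ≠ b) (hac : a ≠ c) (hbc : b ≠ c) :
    ∀ (k : ℕ) (h : List V), (∀ z ∈ h, z = a ∨ z = b ∨ z = c) →
    h.filter (p2 a b) = rep2 a b k → h.filter (p2 a c) = rep2 a c k →
    h.filter (p2 b c) = rep2 b c k → h = rep3 a b c k := by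
  intro k
  induction k with
  | zero =>
    intro h hmem hfab hfac _
    cases h with
    | nil => rfl
    | cons z h' =>
      exfalso
      rcases hmem z (by simp) with hz | hz | hz
      · rw [hz, List.filter_cons_of_pos (by simp [p2])] at hfab
        exact List.cons_ne_nil _ _ hfab
      · rw [hz, List.filter_cons_of_pos (by simp [p2])] at hfab
        exact List.cons_ne_nil _ _ hfab
      · rw [hz, List.filter_cons_of_pos (by simp [p2])] at hfac
        exact List.cons_ne_nil _ _ hfac
  | succ k ih =>
    intro h hmem hfab hfac hfbc
    have e_ab : rep2 a b (k+1) = a :: b :: rep2 a b k := rfl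
    have e_ac : rep2 a c (k+1) = a :: c :: rep2 a c k := rfl
    have e_bc : rep2 b c (k+1) = b :: c :: rep2 b c k := rfl
    cases h with
    | nil => rw [e_ab] at hfab; exact absurd hfab.symm (List.cons_ne_nil _ _)
    | cons z h₁ =>
      have hz : z = a := by
        rcases hmem z (by simp) with hz | hz | hz
        · exact hz
        · exfalso
          rw [hz, List.filter_cons_of_pos (by simp [p2]), e_ab] at hfab
          injection hfab with h1 _
          exact hab h1.symm
        · exfalso
          rw [hz, List.filter_cons_of_pos (by simp [p2]), e_ac] at hfac
          injection hfac with h1 _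
          exact hac h1.symm
      rw [hz] at hfab hfac hfbc ⊢
      rw [List.filter_cons_of_pos (by simp [p2]), e_ab] at hfab
      rw [List.filter_cons_of_pos (by simp [p2]), e_ac] at hfac
      rw [List.filter_cons_of_neg (by simp [p2, hab, hac])] at hfbc
      injection hfab with _ hfab₁
      injection hfac with _ hfac₁
      cases h₁ with
      | nil => exact absurd hfab₁.symm (List.cons_ne_nil _ _)
      | cons z₁ h₂ =>
        have hz₁ : z₁ = b := by
          rcases hmem z₁ (by simp) with hz₁ | hz₁ | hz₁
          · exfalso
            rw [hz₁, List.filter_cons_of_pos (by simp [p2])] at hfab₁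
            injection hfab₁ with h1 _
            exact hab h1
          · exact hz₁
          · exfalso
            rw [hz₁, List.filter_cons_of_pos (by simp [p2]), e_bc] at hfbc
            injection hfbc with h1 _
            exact hbc h1.symm
        rw [hz₁] at hfab₁ hfac₁ hfbc ⊢
        rw [List.filter_cons_of_pos (by simp [p2])] at hfab₁
        injection hfab₁ with _ hfab₂
        rw [List.filter_cons_of_neg (by simp [p2, Ne.symm hab, hbc])] at hfac₁
        rw [List.filter_cons_of_pos (by simp [p2]), e_bc] at hfbc
        injection hfbc with _ hfbc₁
        cases h₂ with
        | nil => exact absurd hfac₁.symm (List.cons_ne_nil _ _)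
        | cons z₂ h₃ =>
          have hz₂ : z₂ = c := by
            rcases hmem z₂ (by simp) with hz₂ | hz₂ | hz₂
            · exfalso
              rw [hz₂, List.filter_cons_of_pos (by simp [p2])] at hfac₁
              injection hfac₁ with h1 _
              exact hac h1
            · exfalso
              rw [hz₂, List.filter_cons_of_pos (by simp [p2])] at hfab₂
              cases k with
              | zero => exact List.cons_ne_nil _ _ hfab₂
              | succ m =>
                rw [show rep2 a b (m+1) = a :: b :: rep2 a b m from rfl] at hfab₂
                injection hfab₂ with h1 _
                exact hab h1.symm
            · exact hz₂
          rw [hz₂] at hfab₂ hfac₁ hfbc₁ ⊢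
          rw [List.filter_cons_of_neg (by simp [p2, Ne.symm hac, Ne.symm hbc])] at hfab₂
          rw [List.filter_cons_of_pos (by simp [p2])] at hfac₁
          injection hfac₁ with _ hfac₂
          rw [List.filter_cons_of_pos (by simp [p2])] at hfbc₁
          injection hfbc₁ with _ hfbc₂
          have hmem₃ : ∀ v ∈ h₃, v = a ∨ v = b ∨ v = c := fun v hv => hmem v (by simp [hv])
          rw [show rep3 a b c (k+1) = a :: b :: c :: rep3 a b c k from rfl,
              ih h₃ hmem₃ hfab₂ hfac₂ hfbc₂]
def p3 (x y w : V) : V → Bool := fun z => decide (z = x ∨ z = y ∨ z = w)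

lemma mem_of_filter_p2 {x y : V} {l : List V} : ∀ z ∈ l.filter (p2 x y), z = x ∨ z = y :=
  fun z hz => by simpa [p2] using (List.mem_filter.mp hz).2

lemma filter_rotate_swap (p : V → Bool) (u : List V) (i : ℕ) :
    ∃ x y : List V, u.filter p = x ++ y ∧ (u.rotate i).filter p = y ++ x := by
  rcases eq_or_ne u [] with rfl | hu
  · exact ⟨[], [], rfl, by simp⟩
  have hpos : 0 < u.length := List.length_pos_iff.mpr hu
  have hn : i % u.length ≤ u.length := le_of_lt (Nat.mod_lt _ hpos)
  refine ⟨(u.take (i % u.length)).filter p, (u.drop (i % u.length)).filter p, ?_, ?_⟩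
  · conv_lhs => rw [← List.take_append_drop (i % u.length) u]
    rw [List.filter_append]
  · rw [← List.rotate_mod, List.rotate_eq_drop_append_take hn, List.filter_append]

lemma rotate_back (u : List V) (hu : u ≠ []) (i : ℕ) : ∃ e, (u.rotate i).rotate e = u := by
  have hpos : 0 < u.length := List.length_pos_iff.mpr hu
  refine ⟨u.length * (i / u.length + 1) - i, ?_⟩
  rw [List.rotate_rotate]
  have h1 : u.length * (i / u.length) + i % u.length = i := Nat.div_add_mod i u.length
  have h2 : i % u.length < u.length := Nat.mod_lt _ hpos
  have h3 : u.length * (i / u.length + 1) = u.length * (i / u.length) + u.length := by ring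
  have h4 : i + (u.length * (i / u.length + 1) - i) = u.length * (i / u.length + 1) := by omega
  rw [h4, List.rotate_length_mul]

lemma rot_classify {x y : V} (hxy : x ≠ y) {u : List V} {k : ℕ}
    (hch : (u.filter (p2 x y)).Chain' (· ≠ ·))
    (hcx : u.count x = k) (hcy : u.count y = k) (i : ℕ) :
    (u.rotate i).filter (p2 x y) = rep2 x y k ∨ (u.rotate i).filter (p2 x y) = rep2 y x k := by
  have hcx' : (u.filter (p2 x y)).count x = k := by
    rw [List.count_filter (by simp [p2])]; exact hcx
  have hcy' : (u.filter (p2 x y)).count y = k := by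
    rw [List.count_filter (by simp [p2])]; exact hcy
  have hu := alt_classify k _ x y hxy mem_of_filter_p2 hch hcx' hcy'
  obtain ⟨P, Q, hPQ, hrot⟩ := filter_rotate_swap (p2 x y) u i
  rw [hrot]
  rcases hu with hu | hu
  · exact swap_rep2 hxy (hPQ.symm.trans hu)
  · rcases swap_rep2 hxy.symm (hPQ.symm.trans hu) with h | h
    · exact Or.inr h
    · exact Or.inl h

lemma pick_by_head {x y : V} (hxy : x ≠ y) {k : ℕ} (hk : 1 ≤ k) {l : List V}
    (h : l = rep2 x y k ∨ l = rep2 y x k) (hh : l.head? = some x) : l = rep2 x y k := by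
  rcases h with h | h
  · exact h
  · exfalso
    obtain ⟨m, rfl⟩ : ∃ m, k = m + 1 := ⟨k - 1, by omega⟩
    rw [h, head?_rep2] at hh
    injection hh with h1
    exact hxy h1.symm

lemma gap_filter {u : List V} {k : ℕ} (hk : 1 ≤ k) {a x : V} (hax : a ≠ x)
    (hch : (u.filter (p2 a x)).Chain' (· ≠ ·)) (hca : u.count a = k) (hcx : u.count x = k)
    {i : ℕ} {s t : List V} (hi : u.rotate i = a :: (s ++ t)) (has : a ∉ s)
    (ht : t = [] ∨ ∃ t', t = a :: t') :
    s.filter (p2 a x) = [x] := by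
  have hw : (u.rotate i).filter (p2 a x) = rep2 a x k := by
    refine pick_by_head hax hk (rot_classify hax hch hca hcx i) ?_
    rw [hi, List.filter_cons_of_pos (by simp [p2])]; rfl
  obtain ⟨m, rfl⟩ : ∃ m, k = m + 1 := ⟨k - 1, by omega⟩
  rw [hi, List.filter_cons_of_pos (by simp [p2]), List.filter_append,
      show rep2 a x (m+1) = a :: x :: rep2 a x m from rfl] at hw
  injection hw with _ hw1
  have hnas : a ∉ s.filter (p2 a x) := fun hmem => has (List.mem_filter.mp hmem).1
  rcases ht with rfl | ⟨t', rfl⟩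
  · rw [show List.filter (p2 a x) [] = [] from rfl, List.append_nil] at hw1
    cases m with
    | zero => exact hw1
    | succ m' =>
      exfalso
      apply hnas
      rw [hw1, show rep2 a x (m'+1) = a :: x :: rep2 a x m' from rfl]
      simp
  · rw [List.filter_cons_of_pos (by simp [p2])] at hw1
    cases hF : s.filter (p2 a x) with
    | nil =>
      exfalso
      rw [hF, List.nil_append] at hw1
      injection hw1 with h1 _
      exact hax h1
    | cons z F' =>
      rw [hF, List.cons_append] at hw1
      injection hw1 with h1 h2
      cases m with
      | zero =>
        exfalso
        rw [show rep2 a x 0 = [] from rfl] at h2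
        exact List.cons_ne_nil _ _ (List.append_eq_nil_iff.mp h2).2
      | succ m' =>
        rw [show rep2 a x (m'+1) = a :: x :: rep2 a x m' from rfl] at h2
        cases F' with
        | nil => rw [h1]
        | cons z' F'' =>
          exfalso
          rw [List.cons_append] at h2
          injection h2 with h3 _
          apply hnas
          rw [hF]
          exact List.mem_cons_of_mem _ (by rw [h3]; exact List.mem_cons_self)

lemma length_eq_counts {x y : V} (hxy : x ≠ y) :
    ∀ (l : List V), (∀ z ∈ l, z = x ∨ z = y) → l.length = l.count x + l.count y := by
  intro l
  induction l with
  | nil => simp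
  | cons z l ih =>
    intro hmem
    have h := ih (fun v hv => hmem v (by simp [hv]))
    rcases hmem z (by simp) with hz | hz <;>
      rw [hz] <;> simp [List.count_cons, hxy, Ne.symm hxy, h] <;> omega

lemma pair_classify {x y : V} (hxy : x ≠ y) {l : List V} (hmem : ∀ z ∈ l, z = x ∨ z = y)
    (hcx : l.count x = 1) (hcy : l.count y = 1) : l = [x, y] ∨ l = [y, x] := by
  have hlen : l.length = 2 := by rw [length_eq_counts hxy l hmem, hcx, hcy]
  obtain ⟨z1, z2, rfl⟩ : ∃ z1 z2, l = [z1, z2] := by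
    rcases l with _ | ⟨z1, (_ | ⟨z2, (_ | ⟨z3, l'⟩)⟩)⟩
    · simp at hlen
    · simp at hlen
    · exact ⟨z1, z2, rfl⟩
    · simp at hlen
  rcases hmem z1 (by simp) with h1 | h1 <;> rcases hmem z2 (by simp) with h2 | h2
  · exfalso; rw [h1, h2] at hcx; simp [List.count_cons] at hcx
  · left; rw [h1, h2]
  · right; rw [h1, h2]
  · exfalso; rw [h1, h2] at hcy; simp [List.count_cons] at hcy

lemma filter_eq_pair {p : V → Bool} {x y : V} :
    ∀ (s : List V), s.filter p = [x, y] → OccursBefore s x y := by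
  intro s
  induction s with
  | nil => intro h; simp at h
  | cons z s' ih =>
    intro h
    cases hp : p z with
    | true =>
      rw [List.filter_cons_of_pos hp] at h
      injection h with h1 h2
      have hy : y ∈ s' := by
        have : y ∈ s'.filter p := by rw [h2]; simp
        exact (List.mem_filter.mp this).1
      obtain ⟨s₂, s₃, rfl⟩ := List.append_of_mem hy
      exact ⟨[], s₂, s₃, by rw [h1]; rfl⟩
    | false =>
      rw [List.filter_cons_of_neg (by simp [hp])] at h
      obtain ⟨s₁, s₂, s₃, rfl⟩ := ih h
      exact ⟨z :: s₁, s₂, s₃, rfl⟩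

lemma occ_filter {p : V → Bool} {x y : V} (hxy : x ≠ y) (hpx : p x = true) (hpy : p y = true)
    {s : List V} (hmem : ∀ z ∈ s.filter p, z = x ∨ z = y)
    (hcx : s.count x = 1) (hcy : s.count y = 1)
    (hocc : OccursBefore s x y) : s.filter p = [x, y] := by
  obtain ⟨s₁, s₂, s₃, rfl⟩ := hocc
  have ex : (s₁ ++ x :: (s₂ ++ y :: s₃)).count x
      = s₁.count x + s₂.count x + s₃.count x + 1 := by
    simp [List.count_append, List.count_cons, Ne.symm hxy]
    omega
  have ey : (s₁ ++ x :: (s₂ ++ y :: s₃)).count y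
      = s₁.count y + s₂.count y + s₃.count y + 1 := by
    simp [List.count_append, List.count_cons, hxy]
    omega
  rw [ex] at hcx
  rw [ey] at hcy
  have hx1 : x ∉ s₁ := List.count_eq_zero.mp (by omega)
  have hx2 : x ∉ s₂ := List.count_eq_zero.mp (by omega)
  have hx3 : x ∉ s₃ := List.count_eq_zero.mp (by omega)
  have hy1 : y ∉ s₁ := List.count_eq_zero.mp (by omega)
  have hy2 : y ∉ s₂ := List.count_eq_zero.mp (by omega)
  have hy3 : y ∉ s₃ := List.count_eq_zero.mp (by omega)
  have hnot : ∀ (z : V), z ∈ s₁ ∨ z ∈ s₂ ∨ z ∈ s₃ → ¬ p z = true := by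
    intro z hz hp
    have hzs : z ∈ s₁ ++ x :: (s₂ ++ y :: s₃) := by rcases hz with h | h | h <;> simp [h]
    rcases hmem z (List.mem_filter.mpr ⟨hzs, hp⟩) with rfl | rfl
    · rcases hz with h | h | h
      exacts [hx1 h, hx2 h, hx3 h]
    · rcases hz with h | h | h
      exacts [hy1 h, hy2 h, hy3 h]
  rw [List.filter_append, List.filter_cons_of_pos hpx, List.filter_append,
      List.filter_cons_of_pos hpy,
      List.filter_eq_nil_iff.mpr (fun z hz => hnot z (Or.inl hz)),
      List.filter_eq_nil_iff.mpr (fun z hz => hnot z (Or.inr (Or.inl hz))),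
      List.filter_eq_nil_iff.mpr (fun z hz => hnot z (Or.inr (Or.inr hz)))]
  rfl

lemma dropWhile_shape (p : V → Bool) : ∀ (l : List V),
    l.dropWhile p = [] ∨ ∃ z t', l.dropWhile p = z :: t' ∧ p z = false := by
  intro l
  induction l with
  | nil => left; rfl
  | cons z l ih =>
    cases hp : p z with
    | true =>
      rw [List.dropWhile_cons, if_pos (by rw [hp])]
      exact ih
    | false =>
      right
      exact ⟨z, l, by rw [List.dropWhile_cons, if_neg (by rw [hp]; simp)], hp⟩

lemma exists_gap {u : List V} {a : V} (ha : a ∈ u) : ∃ s, IsCyclicGap u a s := by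
  obtain ⟨P, Q, rfl⟩ := List.append_of_mem ha
  have hrot : (P ++ a :: Q).rotate P.length = a :: (Q ++ P) := by
    rw [List.rotate_eq_drop_append_take (by simp), List.drop_left, List.take_left]
    rfl
  refine ⟨(Q ++ P).takeWhile (fun z => !decide (z = a)), P.length,
    (Q ++ P).dropWhile (fun z => !decide (z = a)), ?_, ?_, ?_⟩
  · rw [hrot, List.takeWhile_append_dropWhile]
  · intro hmem
    have := List.mem_takeWhile_imp hmem
    simp at this
  · rcases dropWhile_shape (fun z => !decide (z = a)) (Q ++ P) with h | ⟨z, t', h, hz⟩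
    · left; exact h
    · right
      refine ⟨t', ?_⟩
      rw [h]
      have hza : z = a := by simpa using hz
      rw [hza]

lemma no_mixed_gaps {G : SimpleGraph V} {u : List V} {k : ℕ} (hk : 1 ≤ k)
    (huniform : ∀ v : V, u.count v = k) (hrep : Represents G u)
    {a b c : V} (hab : G.Adj a b) (hac : G.Adj a c) (hbc : G.Adj b c)
    {s s' : List V} (hs : IsCyclicGap u a s) (hs' : IsCyclicGap u a s')
    (hfs : s.filter (p2 b c) = [b, c]) (hfs' : s'.filter (p2 b c) = [c, b]) : False := by
  have hab' : a ≠ b := hab.ne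
  have hac' : a ≠ c := hac.ne
  have hbc' : b ≠ c := hbc.ne
  have hchab : (u.filter (p2 a b)).Chain' (· ≠ ·) := chain_of_alternate' _ ((hrep.2 a b hab').mpr hab).2.2
  have hchac : (u.filter (p2 a c)).Chain' (· ≠ ·) := chain_of_alternate' _ ((hrep.2 a c hac').mpr hac).2.2
  have hchbc : (u.filter (p2 b c)).Chain' (· ≠ ·) := chain_of_alternate' _ ((hrep.2 b c hbc').mpr hbc).2.2
  obtain ⟨i, t, hi, hasi, hti⟩ := hs
  obtain ⟨j, t', hj, hasj, htj⟩ := hs'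
  have hune : u ≠ [] := List.ne_nil_of_mem (hrep.1 a)
  have habw : (u.rotate i).filter (p2 a b) = rep2 a b k := by
    refine pick_by_head hab' hk (rot_classify hab' hchab (huniform a) (huniform b) i) ?_
    rw [hi, List.filter_cons_of_pos (by simp [p2])]; rfl
  have hacw : (u.rotate i).filter (p2 a c) = rep2 a c k := by
    refine pick_by_head hac' hk (rot_classify hac' hchac (huniform a) (huniform c) i) ?_
    rw [hi, List.filter_cons_of_pos (by simp [p2])]; rfl
  have hbcw : (u.rotate i).filter (p2 b c) = rep2 b c k := by
    refine pick_by_head hbc' hk (rot_classify hbc' hchbc (huniform b) (huniform c) i) ?_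
    rw [hi, List.filter_cons_of_neg (by simp [p2, hab', hac']), List.filter_append, hfs]
    rfl
  have himp_ab : ∀ z, p2 a b z = true → p3 a b c z = true := by
    intro z hz; simp [p2] at hz; simp [p3]; tauto
  have himp_ac : ∀ z, p2 a c z = true → p3 a b c z = true := by
    intro z hz; simp [p2] at hz; simp [p3]; tauto
  have himp_bc : ∀ z, p2 b c z = true → p3 a b c z = true := by
    intro z hz; simp [p2] at hz; simp [p3]; tauto
  have hmemw : ∀ z ∈ (u.rotate i).filter (p3 a b c), z = a ∨ z = b ∨ z = c :=
    fun z hz => by simpa [p3] using (List.mem_filter.mp hz).2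
  have htriple : (u.rotate i).filter (p3 a b c) = rep3 a b c k :=
    triple_classify hab' hac' hbc' k _ hmemw
      (by rw [filter_sub _ _ himp_ab, habw])
      (by rw [filter_sub _ _ himp_ac, hacw])
      (by rw [filter_sub _ _ himp_bc, hbcw])
  obtain ⟨e, he⟩ := rotate_back u hune i
  have hw' : (u.rotate i).rotate (e + j) = u.rotate j := by
    rw [← List.rotate_rotate, he]
  obtain ⟨P, Q, hPQ, hrot⟩ := filter_rotate_swap (p3 a b c) (u.rotate i) (e + j)
  rw [hw'] at hrot
  have hhead : ((u.rotate j).filter (p3 a b c)).head? = some a := by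
    rw [hj, List.filter_cons_of_pos (by simp [p3])]; rfl
  have hQP : (Q ++ P).head? = some a := by rw [← hrot]; exact hhead
  have htr' : (u.rotate j).filter (p3 a b c) = rep3 a b c k := by
    rw [hrot]
    refine swap_rep3 (hPQ.symm.trans htriple) ?_ ?_
    · rw [hQP]; simp [hab']
    · rw [hQP]; simp [hac']
  have hfin : (u.rotate j).filter (p2 b c) = rep2 b c k := by
    rw [← filter_sub (p2 b c) (p3 a b c) himp_bc, htr', filter_rep3_bc hab' hac']
  have hhead2 : ((u.rotate j).filter (p2 b c)).head? = some c := by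
    rw [hj, List.filter_cons_of_neg (by simp [p2, hab', hac']), List.filter_append, hfs']
    rfl
  rw [hfin] at hhead2
  obtain ⟨m, rfl⟩ : ∃ m, k = m + 1 := ⟨k - 1, by omega⟩
  rw [head?_rep2] at hhead2
  injection hhead2 with h1
  exact hbc' h1

end GapAux

open GapAux in
/-- If `u` is a uniform word-representant of `G` and `a, b, c` are distinct pairwise adjacent
vertices, then (viewing `u` as a cyclic word) exactly one of the following holds:
(i) between every pair of cyclically consecutive occurrences of `a`, `b` occurs before `c`;
(ii) between every pair of cyclically consecutive occurrences of `a`, `c` occurs before `b`. -/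
theorem gap_order_constant_of_triangle
    {V : Type*} [DecidableEq V] (G : SimpleGraph V) (u : List V) (k : ℕ) (hk : 1 ≤ k)
    (huniform : ∀ v : V, u.count v = k) (hrep : Represents G u)
    (a b c : V) (hab : G.Adj a b) (hac : G.Adj a c) (hbc : G.Adj b c) :
    Xor' (∀ s : List V, IsCyclicGap u a s → OccursBefore s b c)
         (∀ s : List V, IsCyclicGap u a s → OccursBefore s c b) := by
  have hab' : a ≠ b := hab.ne
  have hac' : a ≠ c := hac.ne
  have hbc' : b ≠ c := hbc.ne
  have hchab : (u.filter (p2 a b)).Chain' (· ≠ ·) := chain_of_alternate' _ ((hrep.2 a b hab').mpr hab).2.2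
  have hchac : (u.filter (p2 a c)).Chain' (· ≠ ·) := chain_of_alternate' _ ((hrep.2 a c hac').mpr hac).2.2
  obtain ⟨s₀, hs₀⟩ := exists_gap (hrep.1 a)
  have hcnt : ∀ s : List V, IsCyclicGap u a s → s.count b = 1 ∧ s.count c = 1 := by
    intro s hs
    obtain ⟨i, t, hi, has, ht⟩ := hs
    constructor
    · have hfb := gap_filter hk hab' hchab (huniform a) (huniform b) hi has ht
      have h1 : (s.filter (p2 a b)).count b = s.count b := List.count_filter (by simp [p2])
      rw [← h1, hfb]
      simp
    · have hfc := gap_filter hk hac' hchac (huniform a) (huniform c) hi has ht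
      have h1 : (s.filter (p2 a c)).count c = s.count c := List.count_filter (by simp [p2])
      rw [← h1, hfc]
      simp
  have hpair : ∀ s : List V, IsCyclicGap u a s →
      s.filter (p2 b c) = [b, c] ∨ s.filter (p2 b c) = [c, b] := by
    intro s hs
    obtain ⟨h1, h2⟩ := hcnt s hs
    refine pair_classify hbc' mem_of_filter_p2 ?_ ?_
    · rw [List.count_filter (by simp [p2])]; exact h1
    · rw [List.count_filter (by simp [p2])]; exact h2
  have hO1 : ∀ s : List V, IsCyclicGap u a s →
      (OccursBefore s b c ↔ s.filter (p2 b c) = [b, c]) := by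
    intro s hs
    obtain ⟨h1, h2⟩ := hcnt s hs
    exact ⟨occ_filter hbc' (by simp [p2]) (by simp [p2]) mem_of_filter_p2 h1 h2,
      fun h => filter_eq_pair s h⟩
  have hO2 : ∀ s : List V, IsCyclicGap u a s →
      (OccursBefore s c b ↔ s.filter (p2 b c) = [c, b]) := by
    intro s hs
    obtain ⟨h1, h2⟩ := hcnt s hs
    exact ⟨occ_filter (Ne.symm hbc') (by simp [p2]) (by simp [p2])
        (fun z hz => (mem_of_filter_p2 z hz).symm) h2 h1,
      fun h => filter_eq_pair s h⟩
  rcases hpair s₀ hs₀ with h0 | h0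
  · refine Or.inl ⟨?_, ?_⟩
    · intro s hgap
      rcases hpair s hgap with h | h
      · exact (hO1 s hgap).mpr h
      · exact absurd (no_mixed_gaps hk huniform hrep hab hac hbc hs₀ hgap h0 h) not_false
    · intro hQ
      have h2 := (hO2 s₀ hs₀).mp (hQ s₀ hs₀)
      rw [h0] at h2
      injection h2 with h3 _
      exact hbc' h3
  · refine Or.inr ⟨?_, ?_⟩
    · intro s hgap
      rcases hpair s hgap with h | h
      · exact absurd (no_mixed_gaps hk huniform hrep hab hac hbc hgap hs₀ h h0) not_false
      · exact (hO2 s hgap).mpr h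
    · intro hP
      have h2 := (hO1 s₀ hs₀).mp (hP s₀ hs₀)
      rw [h0] at h2
      injection h2 with h3 _
      exact hbc' h3.symm
end
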